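/- arXiv:1804.02547 — 6 statements merged into one kernel-verified Lean document; each statement's English description precedes it below -/
import Mathlib

section
/- The operator T_0 is an affine function, with nonnegative coefficients, of the values of w at the grid indices 0 ≤ k ≤ m+1: for every w : ℕ_0^n → ℝ and m ∈ ℕ_0^n, T_0(w)(m) = e^{−(c+λ)δ} w(m+1) + Σ_{0 ≤ k ≤ m} a_1(k,m) w(k) + a_2(m), where (extending g^δ to ℤ^n by the same formula) a_1(k,m) = ∫_0^δ λ e^{−(c+λ)t} F({α ∈ ℝ_+^n : g^δ(m−k−1) + tp < α ≤ g^δ(m−k) + tp componentwise}) dt ≥ 0, and a_2(m) = ∫_0^δ λ e^{−(c+λ)t} ( ∫_{{α : α ≤ g^δ(m)+tp}} a·( g^δ(m)+tp−α − ⟨g^δ(m)+tp−α⟩^δ ) dF(α) ) dt − ∫_0^δ e^{−(c+λ)t} R(g^δ(m)+tp) dt. -/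
open MeasureTheory Filter

noncomputable section

/-- The grid point associated with a multi-index `m`: `g^δ(m) = (p₁ δ m₁, …, pₙ δ mₙ)`. -/
def gdel (n : ℕ) (p : Fin n → ℝ) (δ : ℝ) (m : Fin n → ℕ) : Fin n → ℝ :=
  fun i => p i * δ * (m i : ℝ)

/-- The index of the closest grid point below `x`: `ρ^δ(x) = (⌊xᵢ/(δ pᵢ)⌋)ᵢ`. -/
def rho (n : ℕ) (p : Fin n → ℝ) (δ : ℝ) (x : Fin n → ℝ) : Fin n → ℕ :=
  fun i => ⌊x i / (δ * p i)⌋₊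

/-- The closest grid point below `x`: `⟨x⟩^δ = g^δ(ρ^δ(x))`. -/
def proj (n : ℕ) (p : Fin n → ℝ) (δ : ℝ) (x : Fin n → ℝ) : Fin n → ℝ :=
  gdel n p δ (rho n p δ x)

/-- `R(x) = λ ∫_{x - α ∉ ℝ₊ⁿ} υ(x,α) dF(α)`. -/
def Rpen (n : ℕ) (lam : ℝ) (F : Measure (Fin n → ℝ))
    (υ : (Fin n → ℝ) → (Fin n → ℝ) → ℝ) (x : Fin n → ℝ) : ℝ :=
  lam * ∫ α in {α : Fin n → ℝ | ¬ 0 ≤ x - α}, υ x α ∂F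

/-- The discrete integral operator `I^δ`. -/
def Idel (n : ℕ) (p a : Fin n → ℝ) (lam c δ : ℝ) (F : Measure (Fin n → ℝ))
    (w : (Fin n → ℕ) → ℝ) (m : Fin n → ℕ) : ℝ :=
  ∫ t in (0:ℝ)..δ, lam * Real.exp (-(c + lam) * t) *
    ∫ α in {α : Fin n → ℝ | α ≤ gdel n p δ m + t • p},
      (w (rho n p δ (gdel n p δ m + t • p - α)) +
        ∑ i, a i * ((gdel n p δ m + t • p - α) i
          - proj n p δ (gdel n p δ m + t • p - α) i)) ∂F

/-- The no-dividend operator `T₀`. -/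
def T0 (n : ℕ) (p a : Fin n → ℝ) (lam c δ : ℝ) (F : Measure (Fin n → ℝ))
    (υ : (Fin n → ℝ) → (Fin n → ℝ) → ℝ) (w : (Fin n → ℕ) → ℝ) (m : Fin n → ℕ) : ℝ :=
  w (m + 1) * Real.exp (-(c + lam) * δ) + Idel n p a lam c δ F w m
    - ∫ t in (0:ℝ)..δ, Real.exp (-(c + lam) * t) * Rpen n lam F υ (gdel n p δ m + t • p)

/-- The dividend-payment operator `Tᵢ` of company `i` (requires `m i > 0`). -/
def Ti (n : ℕ) (p a : Fin n → ℝ) (δ : ℝ) (i : Fin n) (w : (Fin n → ℕ) → ℝ)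
    (m : Fin n → ℕ) : ℝ :=
  w (m - Pi.single i 1) + δ * a i * p i

/-- The switch operator `Tₛ`. -/
def Ts (n : ℕ) (p : Fin n → ℝ) (δ : ℝ) (f : (Fin n → ℝ) → ℝ) (w : (Fin n → ℕ) → ℝ)
    (m : Fin n → ℕ) : ℝ :=
  f (gdel n p δ m)

/-- The Bellman operator `T = max{T₀, (Tᵢ over i with mᵢ>0), Tₛ}`. -/
def Tbell (n : ℕ) (p a : Fin n → ℝ) (lam c δ : ℝ) (F : Measure (Fin n → ℝ))
    (υ : (Fin n → ℝ) → (Fin n → ℝ) → ℝ) (f : (Fin n → ℝ) → ℝ)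
    (w : (Fin n → ℕ) → ℝ) (m : Fin n → ℕ) : ℝ :=
  sSup ({T0 n p a lam c δ F υ w m, Ts n p δ f w m} ∪
    (fun i => Ti n p a δ i w m) '' {i | 0 < m i})


/-- The coefficient `a₁(k,m)`, with `g^δ` extended to `ℤⁿ` by the same formula. -/
def acoef1 (n : ℕ) (p : Fin n → ℝ) (lam c δ : ℝ) (F : Measure (Fin n → ℝ))
    (k m : Fin n → ℕ) : ℝ :=
  ∫ t in (0:ℝ)..δ, lam * Real.exp (-(c + lam) * t) *
    (F {α : Fin n → ℝ | 0 ≤ α ∧ ∀ i,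
        p i * δ * (((m i : ℤ) - (k i : ℤ) - 1 : ℤ) : ℝ) + t * p i < α i ∧
        α i ≤ p i * δ * (((m i : ℤ) - (k i : ℤ) : ℤ) : ℝ) + t * p i}).toReal

/-- The constant term `a₂(m)`. -/
def acoef2 (n : ℕ) (p a : Fin n → ℝ) (lam c δ : ℝ) (F : Measure (Fin n → ℝ))
    (υ : (Fin n → ℝ) → (Fin n → ℝ) → ℝ) (m : Fin n → ℕ) : ℝ :=
  (∫ t in (0:ℝ)..δ, lam * Real.exp (-(c + lam) * t) *
    ∫ α in {α : Fin n → ℝ | α ≤ gdel n p δ m + t • p},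
      (∑ i, a i * ((gdel n p δ m + t • p - α) i
        - proj n p δ (gdel n p δ m + t • p - α) i)) ∂F)
  - ∫ t in (0:ℝ)..δ, Real.exp (-(c + lam) * t) * Rpen n lam F υ (gdel n p δ m + t • p)

def slabSet (n : ℕ) (p : Fin n → ℝ) (δ t : ℝ) (m k : Fin n → ℕ) : Set (Fin n → ℝ) :=
  {α : Fin n → ℝ | 0 ≤ α ∧ ∀ i,
      p i * δ * (((m i : ℤ) - (k i : ℤ) - 1 : ℤ) : ℝ) + t * p i < α i ∧
      α i ≤ p i * δ * (((m i : ℤ) - (k i : ℤ) : ℤ) : ℝ) + t * p i}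

def Sset (n : ℕ) (p : Fin n → ℝ) (δ t : ℝ) (m : Fin n → ℕ) : Set (Fin n → ℝ) :=
  {α : Fin n → ℝ | α ≤ gdel n p δ m + t • p}

lemma measSlab (n : ℕ) (p : Fin n → ℝ) (δ t : ℝ) (m k : Fin n → ℕ) :
    MeasurableSet (slabSet n p δ t m k) := by
  have : slabSet n p δ t m k =
      ⋂ i, ({α : Fin n → ℝ | 0 ≤ α i} ∩
        {α | p i * δ * (((m i : ℤ) - (k i : ℤ) - 1 : ℤ) : ℝ) + t * p i < α i} ∩
        {α | α i ≤ p i * δ * (((m i : ℤ) - (k i : ℤ) : ℤ) : ℝ) + t * p i}) := by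
    ext α
    simp only [slabSet, Set.mem_setOf_eq, Set.mem_iInter, Set.mem_inter_iff, Pi.le_def,
      Pi.zero_apply]
    exact ⟨fun ⟨h0, h⟩ i => ⟨⟨h0 i, (h i).1⟩, (h i).2⟩,
      fun h => ⟨fun i => (h i).1.1, fun i => ⟨(h i).1.2, (h i).2⟩⟩⟩
  rw [this]
  exact MeasurableSet.iInter fun i =>
    (((measurableSet_le measurable_const (measurable_pi_apply i)).inter
      (measurableSet_lt measurable_const (measurable_pi_apply i))).inter
      (measurableSet_le (measurable_pi_apply i) measurable_const))

lemma measSset (n : ℕ) (p : Fin n → ℝ) (δ t : ℝ) (m : Fin n → ℕ) :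
    MeasurableSet (Sset n p δ t m) := by
  have : Sset n p δ t m = ⋂ i, {α : Fin n → ℝ | α i ≤ (gdel n p δ m + t • p) i} := by
    ext α; simp [Sset, Pi.le_def]
  rw [this]
  exact MeasurableSet.iInter fun i =>
    measurableSet_le (measurable_pi_apply i) measurable_const

lemma Capp (n : ℕ) (p : Fin n → ℝ) (δ t : ℝ) (m : Fin n → ℕ) (i : Fin n) :
    (gdel n p δ m + t • p) i = p i * δ * (m i : ℝ) + t * p i := rfl

lemma keyA (n : ℕ) (p : Fin n → ℝ) (hp : ∀ i, 0 < p i) (δ t : ℝ) (hδ : 0 < δ)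
    (ht0 : 0 ≤ t) (ht : t ≤ δ) (m : Fin n → ℕ) (w : (Fin n → ℕ) → ℝ)
    (α : Fin n → ℝ) (hα : 0 ≤ α) :
    Set.indicator (Sset n p δ t m)
      (fun α => w (rho n p δ (gdel n p δ m + t • p - α))) α
    = ∑ k ∈ Fintype.piFinset (fun i => Finset.range (m i + 2)),
        Set.indicator (slabSet n p δ t m k) (fun _ => w k) α := by
  by_cases hS : α ∈ Sset n p δ t m
  · have hSle : ∀ i, α i ≤ p i * δ * (m i : ℝ) + t * p i := fun i => hS i
    set x : Fin n → ℝ := gdel n p δ m + t • p - α with hxdef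
    have hxi : ∀ i, x i = p i * δ * (m i : ℝ) + t * p i - α i := fun i => rfl
    have hx0 : ∀ i, 0 ≤ x i := by
      intro i; rw [hxi i]; have := hSle i; linarith
    have hdp : ∀ i, 0 < δ * p i := fun i => mul_pos hδ (hp i)
    set k0 : Fin n → ℕ := rho n p δ x with hk0def
    have hfl : ∀ i, (k0 i : ℝ) * (δ * p i) ≤ x i := by
      intro i
      have h1 : (k0 i : ℝ) ≤ x i / (δ * p i) :=
        Nat.floor_le (div_nonneg (hx0 i) (hdp i).le)
      exact (le_div_iff₀ (hdp i)).mp h1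
    have hfl' : ∀ i, x i < ((k0 i : ℝ) + 1) * (δ * p i) := by
      intro i
      have h1 : x i / (δ * p i) < (k0 i : ℝ) + 1 := Nat.lt_floor_add_one _
      exact (div_lt_iff₀ (hdp i)).mp h1
    have hmem : k0 ∈ Fintype.piFinset (fun i => Finset.range (m i + 2)) := by
      rw [Fintype.mem_piFinset]
      intro i
      rw [Finset.mem_range]
      have hai : (0:ℝ) ≤ α i := hα i
      have hxb : x i < ((m i : ℝ) + 2) * (δ * p i) := by
        have := hxi i; have h := hp i; nlinarith
      have hlt : x i / (δ * p i) < ((m i + 2 : ℕ) : ℝ) := by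
        rw [div_lt_iff₀ (hdp i)]; push_cast; linarith
      exact (Nat.floor_lt (div_nonneg (hx0 i) (hdp i).le)).mpr hlt
    rw [Finset.sum_eq_single_of_mem k0 hmem]
    · rw [Set.indicator_of_mem hS, Set.indicator_of_mem]
      constructor
      · exact hα
      · intro i
        push_cast
        constructor
        · have := hfl' i; have := hxi i; nlinarith
        · have := hfl i; have := hxi i; nlinarith
    · intro b hb hbne
      rw [Set.indicator_of_notMem]
      rintro ⟨-, hbnds⟩
      apply hbne
      funext i
      have h1 := (hbnds i).1
      have h2 := (hbnds i).2
      push_cast at h1 h2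
      have hlow : (b i : ℝ) ≤ x i / (δ * p i) := by
        rw [le_div_iff₀ (hdp i)]
        have := hxi i; nlinarith
      have hhigh : x i / (δ * p i) < (b i : ℝ) + 1 := by
        rw [div_lt_iff₀ (hdp i)]
        have := hxi i; nlinarith
      have : ⌊x i / (δ * p i)⌋₊ = b i := by
        rw [Nat.floor_eq_iff (div_nonneg (hx0 i) (hdp i).le)]
        exact ⟨by exact_mod_cast hlow, by exact_mod_cast hhigh⟩
      exact this.symm
  · rw [Set.indicator_of_notMem hS, eq_comm]
    apply Finset.sum_eq_zero
    intro k hk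
    rw [Set.indicator_of_notMem]
    rintro ⟨h0, hbnds⟩
    apply hS
    intro i
    have h2 := (hbnds i).2
    push_cast at h2
    show α i ≤ p i * δ * (m i : ℝ) + t * p i
    have hk0 : (0:ℝ) ≤ (k i : ℝ) := Nat.cast_nonneg _
    have := hp i
    nlinarith [mul_nonneg (mul_nonneg (hp i).le hδ.le) hk0]

lemma slabEmpty (n : ℕ) (p : Fin n → ℝ) (hp : ∀ i, 0 < p i) (δ t : ℝ) (hδ : 0 < δ)
    (ht : t < δ) (m k : Fin n → ℕ) (i : Fin n) (hki : m i + 1 ≤ k i) :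
    slabSet n p δ t m k = ∅ := by
  ext α
  simp only [Set.mem_empty_iff_false, iff_false, slabSet, Set.mem_setOf_eq, not_and]
  intro h0 hb
  have h2 := (hb i).2
  push_cast at h2
  have hai : (0:ℝ) ≤ α i := h0 i
  have hki' : (m i : ℝ) - (k i : ℝ) ≤ -1 := by
    have : (m i : ℝ) + 1 ≤ (k i : ℝ) := by exact_mod_cast hki
    linarith
  have hpδ : 0 < p i * δ := mul_pos (hp i) hδ
  nlinarith [mul_le_mul_of_nonneg_left hki' hpδ.le, mul_lt_mul_of_pos_right ht (hp i)]

lemma ae_nonneg (n : ℕ) (F : Measure (Fin n → ℝ))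
    (hFpos : F {α | ¬ 0 ≤ α} = 0) : ∀ᵐ α ∂F, 0 ≤ α := by
  rw [ae_iff]
  simpa using hFpos

lemma innerW (n : ℕ) (p : Fin n → ℝ) (hp : ∀ i, 0 < p i) (δ t : ℝ) (hδ : 0 < δ)
    (ht0 : 0 ≤ t) (ht : t ≤ δ) (m : Fin n → ℕ) (w : (Fin n → ℕ) → ℝ)
    (F : Measure (Fin n → ℝ)) [IsProbabilityMeasure F]
    (hFpos : F {α | ¬ 0 ≤ α} = 0) :
    (∫ α in Sset n p δ t m, w (rho n p δ (gdel n p δ m + t • p - α)) ∂F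
      = ∑ k ∈ Fintype.piFinset (fun i => Finset.range (m i + 2)),
          (F (slabSet n p δ t m k)).toReal * w k)
    ∧ IntegrableOn (fun α => w (rho n p δ (gdel n p δ m + t • p - α)))
        (Sset n p δ t m) F := by
  have hae : ∀ᵐ α ∂F, 0 ≤ α := ae_nonneg n F hFpos
  have heq : (Sset n p δ t m).indicator
      (fun α => w (rho n p δ (gdel n p δ m + t • p - α))) =ᵐ[F]
      fun α => ∑ k ∈ Fintype.piFinset (fun i => Finset.range (m i + 2)),
        Set.indicator (slabSet n p δ t m k) (fun _ => w k) α :=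
    hae.mono (fun α hα => keyA n p hp δ t hδ ht0 ht m w α hα)
  have hint2 : Integrable (fun α => ∑ k ∈ Fintype.piFinset (fun i => Finset.range (m i + 2)),
      Set.indicator (slabSet n p δ t m k) (fun _ => w k) α) F :=
    integrable_finset_sum _ (fun k _ => (integrable_const (w k)).indicator (measSlab n p δ t m k))
  have hint1 : Integrable ((Sset n p δ t m).indicator
      (fun α => w (rho n p δ (gdel n p δ m + t • p - α)))) F := hint2.congr heq.symm
  constructor
  · rw [← integral_indicator (measSset n p δ t m), integral_congr_ae heq,
      integral_finset_sum _ (fun k _ => (integrable_const (w k)).indicator (measSlab n p δ t m k))]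
    refine Finset.sum_congr rfl fun k _ => ?_
    rw [integral_indicator_const _ (measSlab n p δ t m k), smul_eq_mul, measureReal_def]
  · exact (integrable_indicator_iff (measSset n p δ t m)).mp hint1

lemma measDfun (n : ℕ) (p a : Fin n → ℝ) (δ : ℝ) (m : Fin n → ℕ) :
    Measurable (fun q : ℝ × (Fin n → ℝ) => ∑ i, a i *
      ((gdel n p δ m + q.1 • p - q.2) i - proj n p δ (gdel n p δ m + q.1 • p - q.2) i)) := by
  apply Finset.measurable_sum
  intro i _
  apply Measurable.const_mul
  have hg : Measurable (fun q : ℝ × (Fin n → ℝ) => (gdel n p δ m + q.1 • p - q.2) i) := by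
    have : (fun q : ℝ × (Fin n → ℝ) => (gdel n p δ m + q.1 • p - q.2) i)
        = fun q => p i * δ * (m i : ℝ) + q.1 * p i - q.2 i := rfl
    rw [this]
    exact (measurable_const.add (measurable_fst.mul_const _)).sub
      ((measurable_pi_apply i).comp measurable_snd)
  have hproj : (fun q : ℝ × (Fin n → ℝ) => proj n p δ (gdel n p δ m + q.1 • p - q.2) i)
      = fun q => p i * δ *
        ((⌊(gdel n p δ m + q.1 • p - q.2) i / (δ * p i)⌋₊ : ℕ) : ℝ) := rfl
  refine hg.sub ?_
  rw [hproj]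
  exact ((measurable_from_top (f := (Nat.cast : ℕ → ℝ))).comp
    (Nat.measurable_floor.comp (hg.div_const _))).const_mul _

lemma Dbound (n : ℕ) (p a : Fin n → ℝ) (hp : ∀ i, 0 < p i) (ha : ∀ i, 0 < a i)
    (δ t : ℝ) (hδ : 0 < δ) (m : Fin n → ℕ) (α : Fin n → ℝ) (hα : α ∈ Sset n p δ t m) :
    |∑ i, a i * ((gdel n p δ m + t • p - α) i - proj n p δ (gdel n p δ m + t • p - α) i)|
      ≤ ∑ i, a i * (p i * δ) := by
  refine (Finset.abs_sum_le_sum_abs _ _).trans (Finset.sum_le_sum fun i _ => ?_)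
  set x : ℝ := (gdel n p δ m + t • p - α) i with hxdef
  have hx0 : 0 ≤ x := by
    have : α i ≤ p i * δ * (m i : ℝ) + t * p i := hα i
    show 0 ≤ p i * δ * (m i : ℝ) + t * p i - α i
    linarith
  have hdp : 0 < δ * p i := mul_pos hδ (hp i)
  have hfl : (⌊x / (δ * p i)⌋₊ : ℝ) * (δ * p i) ≤ x :=
    (le_div_iff₀ hdp).mp (Nat.floor_le (div_nonneg hx0 hdp.le))
  have hfl' : x < ((⌊x / (δ * p i)⌋₊ : ℝ) + 1) * (δ * p i) :=
    (div_lt_iff₀ hdp).mp (Nat.lt_floor_add_one _)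
  have hd : proj n p δ (gdel n p δ m + t • p - α) i
      = p i * δ * (⌊x / (δ * p i)⌋₊ : ℝ) := rfl
  rw [hd, abs_mul, abs_of_pos (ha i)]
  refine mul_le_mul_of_nonneg_left ?_ (ha i).le
  rw [abs_of_nonneg (by nlinarith)]
  nlinarith

lemma innerD (n : ℕ) (p a : Fin n → ℝ) (hp : ∀ i, 0 < p i) (ha : ∀ i, 0 < a i)
    (δ t : ℝ) (hδ : 0 < δ) (m : Fin n → ℕ)
    (F : Measure (Fin n → ℝ)) [IsProbabilityMeasure F] :
    IntegrableOn (fun α => ∑ i, a i *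
        ((gdel n p δ m + t • p - α) i - proj n p δ (gdel n p δ m + t • p - α) i))
      (Sset n p δ t m) F := by
  refine Integrable.mono' (integrable_const (∑ i, a i * (p i * δ)))
    ?_ ?_
  · exact ((measDfun n p a δ m).comp (measurable_prodMk_left (x := t))).aestronglyMeasurable
  · refine (ae_restrict_iff' (measSset n p δ t m)).mpr (ae_of_all _ fun α hα => ?_)
    simpa [Real.norm_eq_abs] using Dbound n p a hp ha δ t hδ m α hα

lemma inner_total (n : ℕ) (p a : Fin n → ℝ) (hp : ∀ i, 0 < p i) (ha : ∀ i, 0 < a i)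
    (δ t : ℝ) (hδ : 0 < δ) (ht0 : 0 ≤ t) (ht : t < δ) (m : Fin n → ℕ)
    (w : (Fin n → ℕ) → ℝ) (F : Measure (Fin n → ℝ)) [IsProbabilityMeasure F]
    (hFpos : F {α | ¬ 0 ≤ α} = 0) :
    ∫ α in Sset n p δ t m, (w (rho n p δ (gdel n p δ m + t • p - α)) + ∑ i, a i *
        ((gdel n p δ m + t • p - α) i - proj n p δ (gdel n p δ m + t • p - α) i)) ∂F
    = (∑ k ∈ Fintype.piFinset (fun i => Finset.range (m i + 1)),
        (F (slabSet n p δ t m k)).toReal * w k)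
      + ∫ α in Sset n p δ t m, (∑ i, a i *
          ((gdel n p δ m + t • p - α) i - proj n p δ (gdel n p δ m + t • p - α) i)) ∂F := by
  rw [integral_add (innerW n p hp δ t hδ ht0 ht.le m w F hFpos).2
    (innerD n p a hp ha δ t hδ m F)]
  rw [(innerW n p hp δ t hδ ht0 ht.le m w F hFpos).1]
  congr 1
  refine (Finset.sum_subset (Fintype.piFinset_subset _ _ fun i =>
    Finset.range_subset_range.mpr (by omega)) fun k hk hk' => ?_).symm
  have : ∃ i, m i + 1 ≤ k i := by
    by_contra hcon
    push_neg at hcon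
    exact hk' (Fintype.mem_piFinset.mpr fun i => Finset.mem_range.mpr (hcon i))
  obtain ⟨i, hi⟩ := this
  rw [slabEmpty n p hp δ t hδ ht m k i hi, measure_empty]
  simp

lemma measFk (n : ℕ) (p : Fin n → ℝ) (δ : ℝ) (m k : Fin n → ℕ)
    (F : Measure (Fin n → ℝ)) [SFinite F] :
    Measurable (fun t : ℝ => (F (slabSet n p δ t m k)).toReal) := by
  have hB : MeasurableSet {q : ℝ × (Fin n → ℝ) | 0 ≤ q.2 ∧ ∀ i,
      p i * δ * (((m i : ℤ) - (k i : ℤ) - 1 : ℤ) : ℝ) + q.1 * p i < q.2 i ∧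
      q.2 i ≤ p i * δ * (((m i : ℤ) - (k i : ℤ) : ℤ) : ℝ) + q.1 * p i} := by
    have : {q : ℝ × (Fin n → ℝ) | 0 ≤ q.2 ∧ ∀ i,
        p i * δ * (((m i : ℤ) - (k i : ℤ) - 1 : ℤ) : ℝ) + q.1 * p i < q.2 i ∧
        q.2 i ≤ p i * δ * (((m i : ℤ) - (k i : ℤ) : ℤ) : ℝ) + q.1 * p i}
        = ⋂ i, ({q : ℝ × (Fin n → ℝ) | 0 ≤ q.2 i} ∩
          {q | p i * δ * (((m i : ℤ) - (k i : ℤ) - 1 : ℤ) : ℝ) + q.1 * p i < q.2 i} ∩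
          {q | q.2 i ≤ p i * δ * (((m i : ℤ) - (k i : ℤ) : ℤ) : ℝ) + q.1 * p i}) := by
      ext q
      simp only [Set.mem_setOf_eq, Set.mem_iInter, Set.mem_inter_iff, Pi.le_def,
        Pi.zero_apply]
      exact ⟨fun ⟨h0, h⟩ i => ⟨⟨h0 i, (h i).1⟩, (h i).2⟩,
        fun h => ⟨fun i => (h i).1.1, fun i => ⟨(h i).1.2, (h i).2⟩⟩⟩
    rw [this]
    refine MeasurableSet.iInter fun i => ?_
    have h2 : Measurable fun q : ℝ × (Fin n → ℝ) => q.2 i :=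
      (measurable_pi_apply i).comp measurable_snd
    exact ((measurableSet_le measurable_const h2).inter
        (measurableSet_lt (measurable_const.add (measurable_fst.mul_const _)) h2)).inter
      (measurableSet_le h2 (measurable_const.add (measurable_fst.mul_const _)))
  have hpre : (fun t : ℝ => F (slabSet n p δ t m k))
      = fun t => F (Prod.mk t ⁻¹' {q : ℝ × (Fin n → ℝ) | 0 ≤ q.2 ∧ ∀ i,
        p i * δ * (((m i : ℤ) - (k i : ℤ) - 1 : ℤ) : ℝ) + q.1 * p i < q.2 i ∧
        q.2 i ≤ p i * δ * (((m i : ℤ) - (k i : ℤ) : ℤ) : ℝ) + q.1 * p i}) := rfl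
  exact (by rw [hpre] at *; exact (measurable_measure_prodMk_left hB) :
    Measurable fun t : ℝ => F (slabSet n p δ t m k)).ennreal_toReal

lemma intGk (n : ℕ) (p : Fin n → ℝ) (lam c δ : ℝ) (hlam : 0 < lam) (hc : 0 < c)
    (hδ : 0 < δ) (m k : Fin n → ℕ) (F : Measure (Fin n → ℝ)) [IsProbabilityMeasure F] :
    IntervalIntegrable
      (fun t => lam * Real.exp (-(c + lam) * t) * (F (slabSet n p δ t m k)).toReal)
      MeasureTheory.volume 0 δ := by
  rw [intervalIntegrable_iff_integrableOn_Ioc_of_le hδ.le]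
  refine Integrable.mono' (integrable_const lam)
    ((measurable_const.mul (Real.measurable_exp.comp (measurable_id.const_mul _))).mul
      (measFk n p δ m k F)).aestronglyMeasurable
    ((ae_restrict_iff' measurableSet_Ioc).mpr (ae_of_all _ fun t htmem => ?_))
  have he : Real.exp (-(c + lam) * t) ≤ 1 := by
    rw [Real.exp_le_one_iff]
    nlinarith [htmem.1]
  have he0 : 0 < Real.exp (-(c + lam) * t) := Real.exp_pos _
  have hr : (F (slabSet n p δ t m k)).toReal ≤ 1 := by
    have h1 : F (slabSet n p δ t m k) ≤ 1 := prob_le_one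
    simpa using ENNReal.toReal_mono ENNReal.one_ne_top h1
  have hr0 : 0 ≤ (F (slabSet n p δ t m k)).toReal := ENNReal.toReal_nonneg
  rw [Real.norm_eq_abs, abs_of_nonneg (by positivity)]
  calc lam * Real.exp (-(c + lam) * t) * (F (slabSet n p δ t m k)).toReal
      ≤ lam * 1 * 1 := by
        apply mul_le_mul (by nlinarith) hr hr0 (by positivity)
    _ = lam := by ring

lemma measIntD (n : ℕ) (p a : Fin n → ℝ) (δ : ℝ) (m : Fin n → ℕ)
    (F : Measure (Fin n → ℝ)) [SFinite F] :
    StronglyMeasurable (fun t : ℝ => ∫ α in Sset n p δ t m, (∑ i, a i *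
        ((gdel n p δ m + t • p - α) i - proj n p δ (gdel n p δ m + t • p - α) i)) ∂F) := by
  have hBmeas : MeasurableSet {q : ℝ × (Fin n → ℝ) | q.2 ≤ gdel n p δ m + q.1 • p} := by
    have : {q : ℝ × (Fin n → ℝ) | q.2 ≤ gdel n p δ m + q.1 • p}
        = ⋂ i, {q : ℝ × (Fin n → ℝ) | q.2 i ≤ p i * δ * (m i : ℝ) + q.1 * p i} := by
      ext q; simp only [Set.mem_setOf_eq, Set.mem_iInter, Pi.le_def]; rfl
    rw [this]
    refine MeasurableSet.iInter fun i => ?_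
    have h2 : Measurable fun q : ℝ × (Fin n → ℝ) => q.2 i :=
      (measurable_pi_apply i).comp measurable_snd
    exact measurableSet_le h2 (measurable_const.add (measurable_fst.mul_const _))
  have hH : Measurable (Set.indicator {q : ℝ × (Fin n → ℝ) | q.2 ≤ gdel n p δ m + q.1 • p}
      (fun q : ℝ × (Fin n → ℝ) => ∑ i, a i *
        ((gdel n p δ m + q.1 • p - q.2) i - proj n p δ (gdel n p δ m + q.1 • p - q.2) i))) :=
    (measDfun n p a δ m).indicator hBmeas
  have key : (fun t : ℝ => ∫ α in Sset n p δ t m, (∑ i, a i *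
        ((gdel n p δ m + t • p - α) i - proj n p δ (gdel n p δ m + t • p - α) i)) ∂F)
      = fun t : ℝ => ∫ α, Set.indicator {q : ℝ × (Fin n → ℝ) | q.2 ≤ gdel n p δ m + q.1 • p}
          (fun q : ℝ × (Fin n → ℝ) => ∑ i, a i *
            ((gdel n p δ m + q.1 • p - q.2) i - proj n p δ (gdel n p δ m + q.1 • p - q.2) i))
          (t, α) ∂F := by
    funext t
    rw [← integral_indicator (measSset n p δ t m)]
    congr 1
  rw [key]
  exact hH.stronglyMeasurable.integral_prod_right'

lemma intH (n : ℕ) (p a : Fin n → ℝ) (hp : ∀ i, 0 < p i) (ha : ∀ i, 0 < a i)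
    (lam c δ : ℝ) (hlam : 0 < lam) (hc : 0 < c) (hδ : 0 < δ) (m : Fin n → ℕ)
    (F : Measure (Fin n → ℝ)) [IsProbabilityMeasure F] :
    IntervalIntegrable (fun t => lam * Real.exp (-(c + lam) * t) *
      ∫ α in Sset n p δ t m, (∑ i, a i *
        ((gdel n p δ m + t • p - α) i - proj n p δ (gdel n p δ m + t • p - α) i)) ∂F)
      MeasureTheory.volume 0 δ := by
  have hC0 : 0 ≤ ∑ i, a i * (p i * δ) :=
    Finset.sum_nonneg fun i _ => mul_nonneg (ha i).le (mul_nonneg (hp i).le hδ.le)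
  rw [intervalIntegrable_iff_integrableOn_Ioc_of_le hδ.le]
  refine Integrable.mono' (integrable_const (lam * ∑ i, a i * (p i * δ)))
    ((measurable_const.mul
      (Real.measurable_exp.comp (measurable_id.const_mul _))).stronglyMeasurable.mul
      (measIntD n p a δ m F)).aestronglyMeasurable.restrict
    ((ae_restrict_iff' measurableSet_Ioc).mpr (ae_of_all _ fun t htmem => ?_))
  have he : Real.exp (-(c + lam) * t) ≤ 1 := by
    rw [Real.exp_le_one_iff]
    nlinarith [htmem.1]
  have he0 : 0 < Real.exp (-(c + lam) * t) := Real.exp_pos _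
  have hI : ‖∫ α in Sset n p δ t m, (∑ i, a i *
      ((gdel n p δ m + t • p - α) i - proj n p δ (gdel n p δ m + t • p - α) i)) ∂F‖
      ≤ ∑ i, a i * (p i * δ) := by
    have h1 := norm_integral_le_of_norm_le_const
      (μ := F.restrict (Sset n p δ t m)) (C := ∑ i, a i * (p i * δ))
      (f := fun α => ∑ i, a i *
        ((gdel n p δ m + t • p - α) i - proj n p δ (gdel n p δ m + t • p - α) i))
      ((ae_restrict_iff' (measSset n p δ t m)).mpr (ae_of_all _ fun α hα => by
        simpa [Real.norm_eq_abs] using Dbound n p a hp ha δ t hδ m α hα))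
    refine h1.trans ?_
    rw [measureReal_def, Measure.restrict_apply_univ]
    have h2 : (F (Sset n p δ t m)).toReal ≤ 1 := by
      simpa using ENNReal.toReal_mono ENNReal.one_ne_top (prob_le_one (μ := F))
    nlinarith [ENNReal.toReal_nonneg (a := F (Sset n p δ t m))]
  rw [Real.norm_eq_abs, abs_mul, abs_mul, abs_of_pos hlam, abs_of_pos he0]
  have habs : |∫ α in Sset n p δ t m, (∑ i, a i *
      ((gdel n p δ m + t • p - α) i - proj n p δ (gdel n p δ m + t • p - α) i)) ∂F|
      ≤ ∑ i, a i * (p i * δ) := by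
    rw [← Real.norm_eq_abs]; exact hI
  have hmain : lam * Real.exp (-(c + lam) * t) * |∫ α in Sset n p δ t m, (∑ i, a i *
      ((gdel n p δ m + t • p - α) i - proj n p δ (gdel n p δ m + t • p - α) i)) ∂F|
      ≤ lam * 1 * (∑ i, a i * (p i * δ)) :=
    mul_le_mul (by nlinarith) habs (abs_nonneg _) (by nlinarith)
  linarith

lemma acoef1_eq (n : ℕ) (p : Fin n → ℝ) (lam c δ : ℝ) (F : Measure (Fin n → ℝ))
    (k m : Fin n → ℕ) : acoef1 n p lam c δ F k m =
    ∫ t in (0:ℝ)..δ, lam * Real.exp (-(c + lam) * t) * (F (slabSet n p δ t m k)).toReal := rfl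

lemma IdelEq (n : ℕ) (p a : Fin n → ℝ) (hp : ∀ i, 0 < p i) (ha : ∀ i, 0 < a i)
    (lam c δ : ℝ) (hlam : 0 < lam) (hc : 0 < c) (hδ : 0 < δ)
    (F : Measure (Fin n → ℝ)) [IsProbabilityMeasure F]
    (hFpos : F {α | ¬ 0 ≤ α} = 0) (w : (Fin n → ℕ) → ℝ) (m : Fin n → ℕ) :
    Idel n p a lam c δ F w m
    = (∑ k ∈ Fintype.piFinset (fun i => Finset.range (m i + 1)),
        acoef1 n p lam c δ F k m * w k)
      + ∫ t in (0:ℝ)..δ, lam * Real.exp (-(c + lam) * t) *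
          ∫ α in Sset n p δ t m, (∑ i, a i * ((gdel n p δ m + t • p - α) i
            - proj n p δ (gdel n p δ m + t • p - α) i)) ∂F := by
  have hcongr : ∀ᵐ t ∂(MeasureTheory.volume : Measure ℝ), t ∈ Set.uIoc (0:ℝ) δ →
      (lam * Real.exp (-(c + lam) * t) *
        ∫ α in {α : Fin n → ℝ | α ≤ gdel n p δ m + t • p},
          (w (rho n p δ (gdel n p δ m + t • p - α)) +
            ∑ i, a i * ((gdel n p δ m + t • p - α) i
              - proj n p δ (gdel n p δ m + t • p - α) i)) ∂F)
      = (∑ k ∈ Fintype.piFinset (fun i => Finset.range (m i + 1)),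
          lam * Real.exp (-(c + lam) * t) * (F (slabSet n p δ t m k)).toReal * w k)
        + lam * Real.exp (-(c + lam) * t) *
            ∫ α in Sset n p δ t m, (∑ i, a i * ((gdel n p δ m + t • p - α) i
              - proj n p δ (gdel n p δ m + t • p - α) i)) ∂F := by
    have hne : ∀ᵐ t : ℝ ∂MeasureTheory.volume, t ≠ δ := by
      rw [ae_iff]
      simp only [ne_eq, not_not, Set.setOf_eq_eq_singleton]
      exact Real.volume_singleton
    filter_upwards [hne] with t htne htmem
    rw [Set.uIoc_of_le hδ.le] at htmem
    have htδ : t < δ := lt_of_le_of_ne htmem.2 htne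
    rw [show {α : Fin n → ℝ | α ≤ gdel n p δ m + t • p} = Sset n p δ t m from rfl,
      inner_total n p a hp ha δ t hδ htmem.1.le htδ m w F hFpos, mul_add, Finset.mul_sum]
    congr 1
    exact Finset.sum_congr rfl fun k _ => by ring
  have hA : IntervalIntegrable (fun t => ∑ k ∈ Fintype.piFinset (fun i => Finset.range (m i + 1)),
      lam * Real.exp (-(c + lam) * t) * (F (slabSet n p δ t m k)).toReal * w k)
      MeasureTheory.volume 0 δ := by
    have h := IntervalIntegrable.sum (μ := MeasureTheory.volume) (a := 0) (b := δ)
      (f := fun (k : Fin n → ℕ) (t : ℝ) =>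
        lam * Real.exp (-(c + lam) * t) * (F (slabSet n p δ t m k)).toReal * w k)
      (Fintype.piFinset fun i => Finset.range (m i + 1))
      (fun k _ => (intGk n p lam c δ hlam hc hδ m k F).mul_const (w k))
    simpa [Finset.sum_fn] using h
  unfold Idel
  rw [intervalIntegral.integral_congr_ae hcongr,
    intervalIntegral.integral_add hA (intH n p a hp ha lam c δ hlam hc hδ m F),
    intervalIntegral.integral_finset_sum
      (fun k _ => (intGk n p lam c δ hlam hc hδ m k F).mul_const (w k))]
  congr 1
  refine Finset.sum_congr rfl fun k _ => ?_
  rw [intervalIntegral.integral_mul_const, acoef1_eq]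

/-- `T₀` is an affine function, with nonnegative coefficients, of the values
of `w` at the grid indices `0 ≤ k ≤ m+1`. -/
theorem stmt1 (n : ℕ) (hn : 1 ≤ n) (p a : Fin n → ℝ)
    (hp : ∀ i, 0 < p i) (ha : ∀ i, 0 < a i)
    (lam c δ : ℝ) (hlam : 0 < lam) (hc : 0 < c) (hδ : 0 < δ)
    (F : Measure (Fin n → ℝ)) [IsProbabilityMeasure F]
    (hFpos : F {α | ¬ 0 ≤ α} = 0) (hF0 : F {0} = 0)
    (hFmom : Integrable (fun α => ‖α‖) F)
    (υ : (Fin n → ℝ) → (Fin n → ℝ) → ℝ) (hυmeas : Measurable (Function.uncurry υ))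
    (hυint : Integrable (fun α => |υ 0 α|) F)
    (hRcont : ContinuousOn (Rpen n lam F υ) {x | 0 ≤ x}) :
    (∀ k m : Fin n → ℕ, 0 ≤ acoef1 n p lam c δ F k m) ∧
    (∀ (w : (Fin n → ℕ) → ℝ) (m : Fin n → ℕ),
      T0 n p a lam c δ F υ w m =
        Real.exp (-(c + lam) * δ) * w (m + 1) +
        (∑ k ∈ Fintype.piFinset (fun i => Finset.range (m i + 1)),
          acoef1 n p lam c δ F k m * w k) +
        acoef2 n p a lam c δ F υ m) := by
  constructor
  · intro k m
    apply intervalIntegral.integral_nonneg hδ.le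
    intro t _
    exact mul_nonneg (mul_nonneg hlam.le (Real.exp_pos _).le) ENNReal.toReal_nonneg
  · intro w m
    have h := IdelEq n p a hp ha lam c δ hlam hc hδ F hFpos w m
    unfold T0 acoef2
    rw [h]
    unfold Sset
    ring

end
end

section
/- Define the value-iteration sequence v_1(m) = f(g^δ(m)) and v_{l+1} = T(v_l) for l ≥ 1. Then: (i) v_{l+1} ≥ v_l pointwise on ℕ_0^n for every l ≥ 1; and (ii) if w : ℕ_0^n → ℝ is any supersolution of the discrete HJB equation (i.e. T(w) ≤ w pointwise), then v_l ≤ w pointwise for every l ≥ 1. -/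
open MeasureTheory Filter

noncomputable section

namespace Stmt2Aux

/-- The integrand appearing inside `Idel`. -/
def phi (n : ℕ) (p a : Fin n → ℝ) (δ : ℝ) (w : (Fin n → ℕ) → ℝ) (x : Fin n → ℝ) : ℝ :=
  w (rho n p δ x) + ∑ i, a i * (x i - proj n p δ x i)

/-- Uniform bound constant. -/
def Cb (n : ℕ) (p a : Fin n → ℝ) (δ : ℝ) (w : (Fin n → ℕ) → ℝ) (m : Fin n → ℕ) : ℝ :=
  (∑ k ∈ Fintype.piFinset fun i => Finset.Iic (m i + 1), |w k|) + ∑ i, a i * (δ * p i)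

variable {n : ℕ}

lemma measurable_rho (p : Fin n → ℝ) (δ : ℝ) : Measurable (rho n p δ) :=
  measurable_pi_lambda _ fun i =>
    Nat.measurable_floor.comp ((measurable_pi_apply i).div_const _)

lemma measurable_phi (p a : Fin n → ℝ) (δ : ℝ) (w : (Fin n → ℕ) → ℝ) :
    Measurable (phi n p a δ w) := by
  unfold phi
  apply Measurable.add
  · exact (measurable_of_countable w).comp (measurable_rho p δ)
  · apply Finset.measurable_sum
    intro i _
    apply Measurable.const_mul
    apply (measurable_pi_apply i).sub
    have h : Measurable fun x : Fin n → ℝ => (rho n p δ x i : ℝ) :=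
      (measurable_of_countable _).comp ((measurable_pi_apply i).comp (measurable_rho p δ))
    simpa [proj, gdel, mul_comm] using h.const_mul (p i * δ)

lemma Cb_nonneg (p a : Fin n → ℝ) (hp : ∀ i, 0 < p i) (ha : ∀ i, 0 < a i)
    (δ : ℝ) (hδ : 0 < δ) (w : (Fin n → ℕ) → ℝ) (m : Fin n → ℕ) :
    0 ≤ Cb n p a δ w m := by
  apply add_nonneg
  · exact Finset.sum_nonneg fun k _ => abs_nonneg _
  · exact Finset.sum_nonneg fun i _ => mul_nonneg (ha i).le (mul_nonneg hδ.le (hp i).le)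

lemma phi_bound (p a : Fin n → ℝ) (hp : ∀ i, 0 < p i) (ha : ∀ i, 0 < a i)
    (δ : ℝ) (hδ : 0 < δ) (w : (Fin n → ℕ) → ℝ) (m : Fin n → ℕ)
    (x : Fin n → ℝ) (hx0 : 0 ≤ x) (hx : ∀ i, x i ≤ p i * δ * (m i : ℝ) + δ * p i) :
    |phi n p a δ w x| ≤ Cb n p a δ w m := by
  unfold phi Cb
  refine (abs_add_le _ _).trans (add_le_add ?_ ?_)
  · -- membership of rho x in the box
    have hmem : rho n p δ x ∈ Fintype.piFinset fun i => Finset.Iic (m i + 1) := by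
      rw [Fintype.mem_piFinset]
      intro i
      rw [Finset.mem_Iic]
      have hq : (0:ℝ) < δ * p i := mul_pos hδ (hp i)
      have h1 : x i / (δ * p i) ≤ ((m i + 1 : ℕ) : ℝ) := by
        rw [div_le_iff₀ hq]
        push_cast
        calc x i ≤ p i * δ * (m i : ℝ) + δ * p i := hx i
          _ = ((m i : ℝ) + 1) * (δ * p i) := by ring
      calc rho n p δ x i = ⌊x i / (δ * p i)⌋₊ := rfl
        _ ≤ ⌊((m i + 1 : ℕ) : ℝ)⌋₊ := Nat.floor_mono h1
        _ = m i + 1 := Nat.floor_natCast _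
    exact Finset.single_le_sum (f := fun k => |w k|) (fun k _ => abs_nonneg _) hmem
  · refine (Finset.abs_sum_le_sum_abs _ _).trans (Finset.sum_le_sum ?_)
    intro i _
    rw [abs_mul, abs_of_pos (ha i)]
    apply mul_le_mul_of_nonneg_left _ (ha i).le
    have hq : (0:ℝ) < δ * p i := mul_pos hδ (hp i)
    set Fl : ℝ := (⌊x i / (δ * p i)⌋₊ : ℝ) with hFl
    have hproj : proj n p δ x i = Fl * (δ * p i) := by
      simp only [proj, gdel, rho, hFl]; ring
    have h1 : Fl * (δ * p i) ≤ x i := by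
      rw [← le_div_iff₀ hq]
      exact Nat.floor_le (div_nonneg (hx0 i) hq.le)
    have h2 : x i < (Fl + 1) * (δ * p i) := by
      rw [← div_lt_iff₀ hq]
      exact Nat.lt_floor_add_one _
    rw [hproj, abs_le]
    constructor <;> nlinarith

lemma measurableSet_le_const (y : Fin n → ℝ) :
    MeasurableSet {α : Fin n → ℝ | α ≤ y} := by
  have h : {α : Fin n → ℝ | α ≤ y} = ⋂ i, {α : Fin n → ℝ | α i ≤ y i} := by
    ext α; simp [Pi.le_def]
  rw [h]
  exact MeasurableSet.iInter fun i => measurableSet_le (measurable_pi_apply i) measurable_const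


lemma inner_integrable (p a : Fin n → ℝ) (hp : ∀ i, 0 < p i) (ha : ∀ i, 0 < a i)
    (δ : ℝ) (hδ : 0 < δ) (F : Measure (Fin n → ℝ)) [IsProbabilityMeasure F]
    (hFpos : F {α | ¬ 0 ≤ α} = 0) (w : (Fin n → ℕ) → ℝ) (m : Fin n → ℕ)
    (t : ℝ) (ht : t ∈ Set.Icc (0:ℝ) δ) :
    IntegrableOn (fun α => phi n p a δ w (gdel n p δ m + t • p - α))
      {α : Fin n → ℝ | α ≤ gdel n p δ m + t • p} F := by
  apply Integrable.mono' (integrable_const (Cb n p a δ w m))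
  · exact ((measurable_phi p a δ w).comp
      (measurable_const.sub measurable_id)).aestronglyMeasurable
  · have h0 : ∀ᵐ α ∂F, 0 ≤ α := by
      rw [ae_iff]; exact hFpos
    have h0' := ae_restrict_of_ae (s := {α : Fin n → ℝ | α ≤ gdel n p δ m + t • p}) h0
    have hmem := ae_restrict_mem (μ := F) (measurableSet_le_const (gdel n p δ m + t • p))
    filter_upwards [h0', hmem] with α hα hαmem
    rw [Real.norm_eq_abs]
    apply phi_bound p a hp ha δ hδ w m
    · intro i
      simp only [Pi.sub_apply, Pi.add_apply, Pi.smul_apply, smul_eq_mul, Pi.zero_apply]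
      have := hαmem i
      simp only [Pi.add_apply, Pi.smul_apply, smul_eq_mul] at this
      linarith
    · intro i
      have h1 : (0:ℝ) ≤ α i := hα i
      have h2 : t * p i ≤ δ * p i := mul_le_mul_of_nonneg_right ht.2 (hp i).le
      simp only [Pi.sub_apply, Pi.add_apply, Pi.smul_apply, smul_eq_mul, gdel]
      linarith

lemma inner_bound (p a : Fin n → ℝ) (hp : ∀ i, 0 < p i) (ha : ∀ i, 0 < a i)
    (δ : ℝ) (hδ : 0 < δ) (F : Measure (Fin n → ℝ)) [IsProbabilityMeasure F]
    (hFpos : F {α | ¬ 0 ≤ α} = 0) (w : (Fin n → ℕ) → ℝ) (m : Fin n → ℕ)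
    (t : ℝ) (ht : t ∈ Set.Icc (0:ℝ) δ) :
    ‖∫ α in {α : Fin n → ℝ | α ≤ gdel n p δ m + t • p},
        phi n p a δ w (gdel n p δ m + t • p - α) ∂F‖ ≤ Cb n p a δ w m := by
  have hb : ‖∫ α in {α : Fin n → ℝ | α ≤ gdel n p δ m + t • p},
        phi n p a δ w (gdel n p δ m + t • p - α) ∂F‖
      ≤ Cb n p a δ w m * (F {α : Fin n → ℝ | α ≤ gdel n p δ m + t • p}).toReal := by
    apply norm_setIntegral_le_of_norm_le_const_ae (measure_lt_top F _)
    have h0 : ∀ᵐ α ∂F, 0 ≤ α := by rw [ae_iff]; exact hFpos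
    have h0' := ae_restrict_of_ae (s := {α : Fin n → ℝ | α ≤ gdel n p δ m + t • p}) h0
    have hmem := ae_restrict_mem (μ := F) (measurableSet_le_const (gdel n p δ m + t • p))
    filter_upwards [h0', hmem] with α hα hαmem
    rw [Real.norm_eq_abs]
    apply phi_bound p a hp ha δ hδ w m
    · intro i
      have := hαmem i
      simp only [Pi.add_apply, Pi.smul_apply, smul_eq_mul] at this
      simp only [Pi.sub_apply, Pi.add_apply, Pi.smul_apply, smul_eq_mul, Pi.zero_apply]
      linarith
    · intro i
      have h1 : (0:ℝ) ≤ α i := hα i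
      have h2 : t * p i ≤ δ * p i := mul_le_mul_of_nonneg_right ht.2 (hp i).le
      simp only [Pi.sub_apply, Pi.add_apply, Pi.smul_apply, smul_eq_mul, gdel]
      linarith
  refine hb.trans ?_
  have h1 : (F {α : Fin n → ℝ | α ≤ gdel n p δ m + t • p}).toReal ≤ 1 := by
    simpa using ENNReal.toReal_mono ENNReal.one_ne_top
      (prob_le_one (μ := F) (s := {α : Fin n → ℝ | α ≤ gdel n p δ m + t • p}))
  calc Cb n p a δ w m * _ ≤ Cb n p a δ w m * 1 :=
        mul_le_mul_of_nonneg_left h1 (Cb_nonneg p a hp ha δ hδ w m)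
    _ = Cb n p a δ w m := mul_one _

lemma J_stronglyMeasurable (p a : Fin n → ℝ) (δ : ℝ)
    (F : Measure (Fin n → ℝ)) [IsProbabilityMeasure F]
    (w : (Fin n → ℕ) → ℝ) (m : Fin n → ℕ) :
    StronglyMeasurable (fun t : ℝ => ∫ α in {α : Fin n → ℝ | α ≤ gdel n p δ m + t • p},
      phi n p a δ w (gdel n p δ m + t • p - α) ∂F) := by
  have hS : MeasurableSet {q : ℝ × (Fin n → ℝ) | q.2 ≤ gdel n p δ m + q.1 • p} := by
    have h : {q : ℝ × (Fin n → ℝ) | q.2 ≤ gdel n p δ m + q.1 • p}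
        = ⋂ i, {q : ℝ × (Fin n → ℝ) | q.2 i ≤ gdel n p δ m i + q.1 * p i} := by
      ext q; simp [Pi.le_def]
    rw [h]
    exact MeasurableSet.iInter fun i =>
      measurableSet_le (measurable_snd.eval)
        (measurable_const.add (measurable_fst.mul_const _))
  have hmap : Measurable (fun q : ℝ × (Fin n → ℝ) => gdel n p δ m + q.1 • p - q.2) := by
    apply measurable_pi_lambda
    intro i
    have h : (fun q : ℝ × (Fin n → ℝ) => (gdel n p δ m + q.1 • p - q.2) i)
        = fun q : ℝ × (Fin n → ℝ) => gdel n p δ m i + q.1 * p i - q.2 i := by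
      funext q; simp
    rw [h]
    exact (measurable_const.add (measurable_fst.mul_const _)).sub measurable_snd.eval
  let Ψ : ℝ × (Fin n → ℝ) → ℝ :=
    ({q : ℝ × (Fin n → ℝ) | q.2 ≤ gdel n p δ m + q.1 • p}).indicator
      (fun q => phi n p a δ w (gdel n p δ m + q.1 • p - q.2))
  have hΨm : StronglyMeasurable Ψ :=
    (((measurable_phi p a δ w).comp hmap).indicator hS).stronglyMeasurable
  have key : (fun t : ℝ => ∫ α in {α : Fin n → ℝ | α ≤ gdel n p δ m + t • p},
      phi n p a δ w (gdel n p δ m + t • p - α) ∂F) = fun t => ∫ α, Ψ (t, α) ∂F := by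
    funext t
    rw [← integral_indicator (measurableSet_le_const (gdel n p δ m + t • p))]
    apply integral_congr_ae
    apply Filter.Eventually.of_forall
    intro α
    rfl
  rw [key]
  exact hΨm.integral_prod_right'


lemma Idel_eq (p a : Fin n → ℝ) (lam c δ : ℝ) (F : Measure (Fin n → ℝ))
    (w : (Fin n → ℕ) → ℝ) (m : Fin n → ℕ) :
    Idel n p a lam c δ F w m = ∫ t in (0:ℝ)..δ, lam * Real.exp (-(c + lam) * t) *
      ∫ α in {α : Fin n → ℝ | α ≤ gdel n p δ m + t • p},
        phi n p a δ w (gdel n p δ m + t • p - α) ∂F := rfl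

lemma G_intervalIntegrable (p a : Fin n → ℝ) (hp : ∀ i, 0 < p i) (ha : ∀ i, 0 < a i)
    (lam c δ : ℝ) (hlam : 0 < lam) (hc : 0 < c) (hδ : 0 < δ)
    (F : Measure (Fin n → ℝ)) [IsProbabilityMeasure F]
    (hFpos : F {α | ¬ 0 ≤ α} = 0) (w : (Fin n → ℕ) → ℝ) (m : Fin n → ℕ) :
    IntervalIntegrable (fun t : ℝ => lam * Real.exp (-(c + lam) * t) *
      ∫ α in {α : Fin n → ℝ | α ≤ gdel n p δ m + t • p},
        phi n p a δ w (gdel n p δ m + t • p - α) ∂F) MeasureTheory.volume 0 δ := by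
  rw [intervalIntegrable_iff_integrableOn_Ioc_of_le hδ.le]
  apply Integrable.mono' (integrable_const (lam * Cb n p a δ w m))
  · apply StronglyMeasurable.aestronglyMeasurable
    exact ((stronglyMeasurable_const.mul
      (Real.continuous_exp.comp (continuous_const.mul continuous_id)).stronglyMeasurable).mul
      (J_stronglyMeasurable p a δ F w m))
  · filter_upwards [ae_restrict_mem measurableSet_Ioc] with t ht
    have ht' : t ∈ Set.Icc (0:ℝ) δ := ⟨ht.1.le, ht.2⟩
    rw [Real.norm_eq_abs, abs_mul, abs_mul, abs_of_pos hlam, Real.abs_exp]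
    have he : Real.exp (-(c + lam) * t) ≤ 1 := by
      rw [show (1:ℝ) = Real.exp 0 from (Real.exp_zero).symm]
      apply Real.exp_le_exp.2
      have : 0 ≤ (c + lam) * t := mul_nonneg (by linarith) ht'.1
      linarith
    have hJ := inner_bound p a hp ha δ hδ F hFpos w m t ht'
    rw [Real.norm_eq_abs] at hJ
    calc lam * Real.exp (-(c + lam) * t) * |_|
        ≤ lam * 1 * Cb n p a δ w m := by
          apply mul_le_mul (mul_le_mul_of_nonneg_left he hlam.le) hJ (abs_nonneg _)
          positivity
      _ = lam * Cb n p a δ w m := by ring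

lemma Idel_mono (p a : Fin n → ℝ) (hp : ∀ i, 0 < p i) (ha : ∀ i, 0 < a i)
    (lam c δ : ℝ) (hlam : 0 < lam) (hc : 0 < c) (hδ : 0 < δ)
    (F : Measure (Fin n → ℝ)) [IsProbabilityMeasure F]
    (hFpos : F {α | ¬ 0 ≤ α} = 0) (w₁ w₂ : (Fin n → ℕ) → ℝ) (hw : ∀ k, w₁ k ≤ w₂ k)
    (m : Fin n → ℕ) :
    Idel n p a lam c δ F w₁ m ≤ Idel n p a lam c δ F w₂ m := by
  rw [Idel_eq, Idel_eq]
  apply intervalIntegral.integral_mono_on hδ.le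
    (G_intervalIntegrable p a hp ha lam c δ hlam hc hδ F hFpos w₁ m)
    (G_intervalIntegrable p a hp ha lam c δ hlam hc hδ F hFpos w₂ m)
  intro t ht
  have hnn : (0:ℝ) ≤ lam * Real.exp (-(c + lam) * t) := by positivity
  apply mul_le_mul_of_nonneg_left _ hnn
  apply setIntegral_mono (inner_integrable p a hp ha δ hδ F hFpos w₁ m t ht)
    (inner_integrable p a hp ha δ hδ F hFpos w₂ m t ht)
  intro α
  exact add_le_add (hw _) le_rfl

lemma T0_mono (p a : Fin n → ℝ) (hp : ∀ i, 0 < p i) (ha : ∀ i, 0 < a i)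
    (lam c δ : ℝ) (hlam : 0 < lam) (hc : 0 < c) (hδ : 0 < δ)
    (F : Measure (Fin n → ℝ)) [IsProbabilityMeasure F]
    (hFpos : F {α | ¬ 0 ≤ α} = 0) (υ : (Fin n → ℝ) → (Fin n → ℝ) → ℝ)
    (w₁ w₂ : (Fin n → ℕ) → ℝ) (hw : ∀ k, w₁ k ≤ w₂ k) (m : Fin n → ℕ) :
    T0 n p a lam c δ F υ w₁ m ≤ T0 n p a lam c δ F υ w₂ m := by
  unfold T0
  have h1 : w₁ (m + 1) * Real.exp (-(c + lam) * δ) ≤ w₂ (m + 1) * Real.exp (-(c + lam) * δ) :=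
    mul_le_mul_of_nonneg_right (hw _) (Real.exp_pos _).le
  have h2 := Idel_mono p a hp ha lam c δ hlam hc hδ F hFpos w₁ w₂ hw m
  linarith

lemma Tbell_bddAbove (p a : Fin n → ℝ) (lam c δ : ℝ) (F : Measure (Fin n → ℝ))
    (υ : (Fin n → ℝ) → (Fin n → ℝ) → ℝ) (f : (Fin n → ℝ) → ℝ)
    (w : (Fin n → ℕ) → ℝ) (m : Fin n → ℕ) :
    BddAbove ({T0 n p a lam c δ F υ w m, Ts n p δ f w m} ∪
      (fun i => Ti n p a δ i w m) '' {i | 0 < m i}) :=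
  (((Set.finite_singleton _).insert _).union ((Set.toFinite _).image _)).bddAbove

lemma Ts_le_Tbell (p a : Fin n → ℝ) (lam c δ : ℝ) (F : Measure (Fin n → ℝ))
    (υ : (Fin n → ℝ) → (Fin n → ℝ) → ℝ) (f : (Fin n → ℝ) → ℝ)
    (w : (Fin n → ℕ) → ℝ) (m : Fin n → ℕ) :
    Ts n p δ f w m ≤ Tbell n p a lam c δ F υ f w m :=
  le_csSup (Tbell_bddAbove p a lam c δ F υ f w m)
    (Set.mem_union_left _ (Set.mem_insert_iff.mpr (Or.inr rfl)))

lemma Tbell_mono (p a : Fin n → ℝ) (hp : ∀ i, 0 < p i) (ha : ∀ i, 0 < a i)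
    (lam c δ : ℝ) (hlam : 0 < lam) (hc : 0 < c) (hδ : 0 < δ)
    (F : Measure (Fin n → ℝ)) [IsProbabilityMeasure F]
    (hFpos : F {α | ¬ 0 ≤ α} = 0) (υ : (Fin n → ℝ) → (Fin n → ℝ) → ℝ)
    (f : (Fin n → ℝ) → ℝ)
    (w₁ w₂ : (Fin n → ℕ) → ℝ) (hw : ∀ k, w₁ k ≤ w₂ k) (m : Fin n → ℕ) :
    Tbell n p a lam c δ F υ f w₁ m ≤ Tbell n p a lam c δ F υ f w₂ m := by
  unfold Tbell
  have hne : ({T0 n p a lam c δ F υ w₁ m, Ts n p δ f w₁ m} ∪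
      (fun i => Ti n p a δ i w₁ m) '' {i | 0 < m i}).Nonempty :=
    ⟨Ts n p δ f w₁ m, Set.mem_union_left _ (Set.mem_insert_iff.mpr (Or.inr rfl))⟩
  apply csSup_le hne
  rintro x (hx | ⟨i, hi, rfl⟩)
  · rcases Set.mem_insert_iff.1 hx with rfl | hx
    · exact (T0_mono p a hp ha lam c δ hlam hc hδ F hFpos υ w₁ w₂ hw m).trans
        (le_csSup (Tbell_bddAbove p a lam c δ F υ f w₂ m)
          (Set.mem_union_left _ (Set.mem_insert _ _)))
    · rcases Set.mem_singleton_iff.1 hx with rfl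
      exact le_csSup (Tbell_bddAbove p a lam c δ F υ f w₂ m)
        (Set.mem_union_left _ (Set.mem_insert_iff.mpr (Or.inr rfl)))
  · have hle : Ti n p a δ i w₁ m ≤ Ti n p a δ i w₂ m := add_le_add (hw _) le_rfl
    exact hle.trans (le_csSup (Tbell_bddAbove p a lam c δ F υ f w₂ m)
      (Set.mem_union_right _ ⟨i, hi, rfl⟩))

end Stmt2Aux


/-- the value-iteration sequence `v₁ = f ∘ g^δ`, `v_{l+1} = T(v_l)` is
nondecreasing, and bounded above by every discrete supersolution. -/
theorem stmt2 (n : ℕ) (hn : 1 ≤ n) (p a : Fin n → ℝ)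
    (hp : ∀ i, 0 < p i) (ha : ∀ i, 0 < a i)
    (lam c δ : ℝ) (hlam : 0 < lam) (hc : 0 < c) (hδ : 0 < δ)
    (F : Measure (Fin n → ℝ)) [IsProbabilityMeasure F]
    (hFpos : F {α | ¬ 0 ≤ α} = 0) (hF0 : F {0} = 0)
    (hFmom : Integrable (fun α => ‖α‖) F)
    (υ : (Fin n → ℝ) → (Fin n → ℝ) → ℝ) (hυmeas : Measurable (Function.uncurry υ))
    (hυint : Integrable (fun α => |υ 0 α|) F)
    (hRcont : ContinuousOn (Rpen n lam F υ) {x | 0 ≤ x})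
    (f : (Fin n → ℝ) → ℝ)
    (v : ℕ → (Fin n → ℕ) → ℝ)
    (hv1 : ∀ m, v 1 m = f (gdel n p δ m))
    (hvrec : ∀ l, 1 ≤ l → v (l + 1) = Tbell n p a lam c δ F υ f (v l)) :
    (∀ l, 1 ≤ l → ∀ m, v l m ≤ v (l + 1) m) ∧
    (∀ w : (Fin n → ℕ) → ℝ, (∀ m, Tbell n p a lam c δ F υ f w m ≤ w m) →
      ∀ l, 1 ≤ l → ∀ m, v l m ≤ w m) := by
  constructor
  · intro l hl
    induction l, hl using Nat.le_induction with
    | base =>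
      intro m
      calc v 1 m = Ts n p δ f (v 1) m := hv1 m
        _ ≤ Tbell n p a lam c δ F υ f (v 1) m :=
            Stmt2Aux.Ts_le_Tbell p a lam c δ F υ f (v 1) m
        _ = v 2 m := by rw [hvrec 1 le_rfl]
    | succ l hl ih =>
      intro m
      calc v (l + 1) m = Tbell n p a lam c δ F υ f (v l) m := by rw [hvrec l hl]
        _ ≤ Tbell n p a lam c δ F υ f (v (l + 1)) m :=
            Stmt2Aux.Tbell_mono p a hp ha lam c δ hlam hc hδ F hFpos υ f (v l) (v (l + 1))
              (fun k => ih k) m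
        _ = v (l + 2) m := by rw [hvrec (l + 1) (by omega)]
  · intro w hw l hl
    induction l, hl using Nat.le_induction with
    | base =>
      intro m
      calc v 1 m = Ts n p δ f w m := hv1 m
        _ ≤ Tbell n p a lam c δ F υ f w m := Stmt2Aux.Ts_le_Tbell p a lam c δ F υ f w m
        _ ≤ w m := hw m
    | succ l hl ih =>
      intro m
      calc v (l + 1) m = Tbell n p a lam c δ F υ f (v l) m := by rw [hvrec l hl]
        _ ≤ Tbell n p a lam c δ F υ f w m :=
            Stmt2Aux.Tbell_mono p a hp ha lam c δ hlam hc hδ F hFpos υ f (v l) w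
              (fun k => ih k) m
        _ ≤ w m := hw m

end
end

section
/- In the two-company setting, suppose k_0 > (p_1 + p_2)/c and V_2(z) < z + k_0, V_1(z) < z + k_0 and V_M(z) < z + c_M + k_0 for all z ≥ 0. Then for every k ≥ k_0 the continuously differentiable function W_k(x_1,x_2) := x_1 + x_2 + k satisfies, at every point x ∈ ℝ_+²: ∂_{x_1}W_k(x) = ∂_{x_2}W_k(x) = 1 = a_i, f(x) − W_k(x) < 0, and L(W_k)(x) < 0; hence max{max_i(a_i − ∂_{x_i}W_k(x)), L(W_k)(x), f(x) − W_k(x)} = 0 for every x ∈ ℝ_+², i.e. each W_k solves the HJB equation classically. In particular the HJB equation admits infinitely many solutions. -/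
open MeasureTheory Filter

noncomputable section

/-- The integral operator `I(W)(x) = λ ∫_{x-α ∈ ℝ₊ⁿ} W(x−α) dF(α)`. -/
def Iop (n : ℕ) (lam : ℝ) (F : Measure (Fin n → ℝ))
    (W : (Fin n → ℝ) → ℝ) (x : Fin n → ℝ) : ℝ :=
  lam * ∫ α in {α : Fin n → ℝ | 0 ≤ x - α}, W (x - α) ∂F

/-- The discounted generator `L(W)(x) = p·∇W(x) − (c+λ)W(x) + I(W)(x) − R(x)`. -/
def Lop (n : ℕ) (p : Fin n → ℝ) (lam c : ℝ) (F : Measure (Fin n → ℝ))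
    (υ : (Fin n → ℝ) → (Fin n → ℝ) → ℝ) (W : (Fin n → ℝ) → ℝ) (x : Fin n → ℝ) : ℝ :=
  (∑ i, p i * fderiv ℝ W x (Pi.single i 1)) - (c + lam) * W x +
    Iop n lam F W x - Rpen n lam F υ x

/-- The two-company claim distribution `F = (λ₁/λ)(F₁ ⊗ δ₀) + (λ₂/λ)(δ₀ ⊗ F₂)`. -/
def Fmix (lam1 lam2 : ℝ) (μ1 μ2 : Measure ℝ) : Measure (Fin 2 → ℝ) :=
  (ENNReal.ofReal (lam1 / (lam1 + lam2))) • Measure.map (fun u : ℝ => ![u, 0]) μ1 +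
  (ENNReal.ofReal (lam2 / (lam1 + lam2))) • Measure.map (fun u : ℝ => ![0, u]) μ2

/-- The two-company penalty `υ(x,α) = −(V₂(x₂)1_{x₁<α₁} + V₁(x₁)1_{x₂<α₂})`. -/
def upsilon2 (V1 V2 : ℝ → ℝ) (x α : Fin 2 → ℝ) : ℝ :=
  -((if x 0 < α 0 then V2 (x 1) else 0) + (if x 1 < α 1 then V1 (x 0) else 0))

/-- The merger switch value `f(x) = V_M(x₁+x₂−c_M)1_{x₁+x₂ ≥ c_M}`. -/
def fmerge (VM : ℝ → ℝ) (cM : ℝ) (x : Fin 2 → ℝ) : ℝ :=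
  if cM ≤ x 0 + x 1 then VM (x 0 + x 1 - cM) else 0

lemma meas_f1 : Measurable (fun u : ℝ => ![u, (0:ℝ)]) := by
  rw [measurable_pi_iff]; intro i
  fin_cases i <;> simp <;> measurability

lemma meas_f2 : Measurable (fun u : ℝ => ![(0:ℝ), u]) := by
  rw [measurable_pi_iff]; intro i
  fin_cases i <;> simp <;> measurability

lemma mix_integral (lam1 lam2 : ℝ) (h1 : 0 ≤ lam1) (h2 : 0 ≤ lam2)
    (μ1 μ2 : Measure ℝ) [IsFiniteMeasure μ1] [IsFiniteMeasure μ2]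
    (s : Set (Fin 2 → ℝ)) (hs : MeasurableSet s)
    (g : (Fin 2 → ℝ) → ℝ) (hg : Measurable g)
    (hi1 : Integrable (fun u => g ![u,0]) (μ1.restrict ((fun u : ℝ => ![u,0]) ⁻¹' s)))
    (hi2 : Integrable (fun u => g ![0,u]) (μ2.restrict ((fun u : ℝ => ![0,u]) ⁻¹' s))) :
    ∫ α in s, g α ∂(Fmix lam1 lam2 μ1 μ2) =
      (lam1/(lam1+lam2)) * ∫ u in (fun u : ℝ => ![u,0]) ⁻¹' s, g ![u,0] ∂μ1 +
      (lam2/(lam1+lam2)) * ∫ u in (fun u : ℝ => ![0,u]) ⁻¹' s, g ![0,u] ∂μ2 := by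
  have hd1 : 0 ≤ lam1 / (lam1 + lam2) := by positivity
  have hd2 : 0 ≤ lam2 / (lam1 + lam2) := by positivity
  rw [Fmix, Measure.restrict_add, Measure.restrict_smul, Measure.restrict_smul,
    Measure.restrict_map meas_f1 hs, Measure.restrict_map meas_f2 hs]
  have hI1 : Integrable g (Measure.map (fun u : ℝ => ![u,0]) (μ1.restrict ((fun u : ℝ => ![u,0]) ⁻¹' s))) :=
    (integrable_map_measure hg.aestronglyMeasurable meas_f1.aemeasurable).2 hi1
  have hI2 : Integrable g (Measure.map (fun u : ℝ => ![0,u]) (μ2.restrict ((fun u : ℝ => ![0,u]) ⁻¹' s))) :=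
    (integrable_map_measure hg.aestronglyMeasurable meas_f2.aemeasurable).2 hi2
  rw [integral_add_measure (hI1.smul_measure ENNReal.ofReal_ne_top)
    (hI2.smul_measure ENNReal.ofReal_ne_top),
    integral_smul_measure, integral_smul_measure,
    integral_map meas_f1.aemeasurable hg.aestronglyMeasurable,
    integral_map meas_f2.aemeasurable hg.aestronglyMeasurable,
    ENNReal.toReal_ofReal hd1, ENNReal.toReal_ofReal hd2, smul_eq_mul, smul_eq_mul]

lemma final_ineq (p0 p1 lam1 lam2 c k0 k A B I1 I2 m1 m1' m2 m2' v1 v2 : ℝ)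
    (hp01 : p0 + p1 < c*k0) (hk : k0 ≤ k) (hk0pos : 0 < k0) (hA : 0 ≤ A) (hB : 0 ≤ B)
    (hc : 0 < c) (hl1 : 0 < lam1) (hl2 : 0 < lam2)
    (hI1 : I1 ≤ (A+B+k)*m1) (hI2 : I2 ≤ (A+B+k)*m2)
    (hm1 : m1 + m1' = 1) (hm2 : m2 + m2' = 1)
    (hm1' : 0 ≤ m1') (hm2' : 0 ≤ m2') (hm1n : 0 ≤ m1) (hm2n : 0 ≤ m2)
    (hv2 : v2 ≤ B + k0) (hv1 : v1 ≤ A + k0) :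
    p0 + p1 - (c + (lam1+lam2)) * (A+B+k) + (lam1*I1 + lam2*I2) +
      (lam1*(v2*m1') + lam2*(v1*m2')) < 0 := by
  have h1 : lam1*I1 ≤ lam1*((A+B+k)*m1) := by nlinarith
  have h2 : lam2*I2 ≤ lam2*((A+B+k)*m2) := by nlinarith
  have h3 : lam1*(v2*m1') ≤ lam1*((A+B+k)*m1') :=
    mul_le_mul_of_nonneg_left
      (mul_le_mul_of_nonneg_right (by linarith) hm1') hl1.le
  have h4 : lam2*(v1*m2') ≤ lam2*((A+B+k)*m2') :=
    mul_le_mul_of_nonneg_left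
      (mul_le_mul_of_nonneg_right (by linarith) hm2') hl2.le
  have k1 : lam1*((A+B+k)*m1) + lam1*((A+B+k)*m1') = lam1*(A+B+k) := by
    rw [← mul_add, ← mul_add, hm1, mul_one]
  have k2 : lam2*((A+B+k)*m2) + lam2*((A+B+k)*m2') = lam2*(A+B+k) := by
    rw [← mul_add, ← mul_add, hm2, mul_one]
  nlinarith [mul_pos hc (show (0:ℝ) < A+B+k by nlinarith),
    mul_le_mul_of_nonneg_left (show k0 ≤ A+B+k by linarith) hc.le]

def Lmap : (Fin 2 → ℝ) →L[ℝ] ℝ :=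
  (ContinuousLinearMap.proj (R := ℝ) (φ := fun _ : Fin 2 => ℝ) 0) +
  (ContinuousLinearMap.proj (R := ℝ) (φ := fun _ : Fin 2 => ℝ) 1)

lemma Wk_eq (k : ℝ) : (fun y : Fin 2 → ℝ => y 0 + y 1 + k) = fun y => Lmap y + k := by
  funext y; simp [Lmap]

lemma contDiff_Wk (k : ℝ) : ContDiff ℝ 1 (fun y : Fin 2 → ℝ => y 0 + y 1 + k) := by
  rw [Wk_eq]; exact Lmap.contDiff.add contDiff_const

lemma fderiv_Wk (k : ℝ) (x : Fin 2 → ℝ) (i : Fin 2) :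
    fderiv ℝ (fun y : Fin 2 → ℝ => y 0 + y 1 + k) x (Pi.single i 1) = 1 := by
  rw [Wk_eq]
  rw [(Lmap.hasFDerivAt.add_const k).fderiv]
  fin_cases i <;> simp [Lmap, Pi.single, Function.update]

lemma lop_neg (p : Fin 2 → ℝ) (hp : ∀ i, 0 < p i)
    (lam1 lam2 c : ℝ) (hlam1 : 0 < lam1) (hlam2 : 0 < lam2) (hc : 0 < c)
    (μ1 μ2 : Measure ℝ) [IsProbabilityMeasure μ1] [IsProbabilityMeasure μ2]
    (hμ1supp : μ1 (Set.Iic 0) = 0) (hμ2supp : μ2 (Set.Iic 0) = 0)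
    (V1 V2 : ℝ → ℝ)
    (hV1nonneg : ∀ z, 0 ≤ z → 0 ≤ V1 z) (hV2nonneg : ∀ z, 0 ≤ z → 0 ≤ V2 z)
    (k0 : ℝ) (hk0 : (p 0 + p 1) / c < k0)
    (hbV1 : ∀ z, 0 ≤ z → V1 z < z + k0)
    (hbV2 : ∀ z, 0 ≤ z → V2 z < z + k0)
    (k : ℝ) (hk : k0 ≤ k) (x : Fin 2 → ℝ) (hx : 0 ≤ x) :
    Lop 2 p (lam1 + lam2) c (Fmix lam1 lam2 μ1 μ2) (upsilon2 V1 V2)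
      (fun y : Fin 2 → ℝ => y 0 + y 1 + k) x < 0 := by
  have hx0 : 0 ≤ x 0 := hx 0
  have hx1 : 0 ≤ x 1 := hx 1
  have hk0pos : 0 < k0 := lt_trans (div_pos (by linarith [hp 0, hp 1]) hc) hk0
  have hp01 : p 0 + p 1 < c * k0 := by
    rw [div_lt_iff₀ hc] at hk0; linarith [hk0]
  have hlam : (0:ℝ) < lam1 + lam2 := by linarith
  -- a.e. positivity
  have hae1 : ∀ᵐ u ∂μ1, 0 < u := by
    rw [ae_iff]; simpa [not_lt, Set.Iic] using hμ1supp
  have hae2 : ∀ᵐ u ∂μ2, 0 < u := by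
    rw [ae_iff]; simpa [not_lt, Set.Iic] using hμ2supp
  -- set identities
  have hs_eq : {α : Fin 2 → ℝ | 0 ≤ x - α} = Set.Iic x := by
    ext α; simp [sub_nonneg]
  have hsc_eq : {α : Fin 2 → ℝ | ¬ 0 ≤ x - α} = (Set.Iic x)ᶜ := by
    ext α; simp [sub_nonneg]
  have hpre1 : (fun u : ℝ => ![u,0]) ⁻¹' Set.Iic x = Set.Iic (x 0) := by
    ext u; simp [Set.mem_Iic, Pi.le_def, Fin.forall_fin_two, hx1]
  have hpre2 : (fun u : ℝ => ![0,u]) ⁻¹' Set.Iic x = Set.Iic (x 1) := by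
    ext u; simp [Set.mem_Iic, Pi.le_def, Fin.forall_fin_two, hx0, and_comm]
  have hpre1c : (fun u : ℝ => ![u,0]) ⁻¹' (Set.Iic x)ᶜ = Set.Ioi (x 0) := by
    rw [Set.preimage_compl, hpre1, Set.compl_Iic]
  have hpre2c : (fun u : ℝ => ![0,u]) ⁻¹' (Set.Iic x)ᶜ = Set.Ioi (x 1) := by
    rw [Set.preimage_compl, hpre2, Set.compl_Iic]
  -- abbreviations
  set A := x 0 with hAdef
  set B := x 1 with hBdef
  set m1 := (μ1 (Set.Iic A)).toReal with hm1def
  set m1' := (μ1 (Set.Ioi A)).toReal with hm1'def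
  set m2 := (μ2 (Set.Iic B)).toReal with hm2def
  set m2' := (μ2 (Set.Ioi B)).toReal with hm2'def
  have hm1sum : m1 + m1' = 1 := by
    have h : μ1 (Set.Iic A) + μ1 (Set.Ioi A) = 1 := by
      rw [← measure_union (Set.Iic_disjoint_Ioi le_rfl) measurableSet_Ioi,
        Set.Iic_union_Ioi, measure_univ]
    have := congrArg ENNReal.toReal h
    rwa [ENNReal.toReal_add (measure_ne_top _ _) (measure_ne_top _ _),
      ENNReal.toReal_one] at this
  have hm2sum : m2 + m2' = 1 := by
    have h : μ2 (Set.Iic B) + μ2 (Set.Ioi B) = 1 := by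
      rw [← measure_union (Set.Iic_disjoint_Ioi le_rfl) measurableSet_Ioi,
        Set.Iic_union_Ioi, measure_univ]
    have := congrArg ENNReal.toReal h
    rwa [ENNReal.toReal_add (measure_ne_top _ _) (measure_ne_top _ _),
      ENNReal.toReal_one] at this
  -- the integrand of Iop
  have hgI : Measurable (fun α : Fin 2 → ℝ => (x - α) 0 + (x - α) 1 + k) := by
    have : (fun α : Fin 2 → ℝ => (x - α) 0 + (x - α) 1 + k)
        = fun α => (x 0 - α 0) + (x 1 - α 1) + k := by
      funext α; simp [Pi.sub_apply]
    rw [this]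
    exact (((measurable_const.sub (measurable_pi_apply 0)).add
      (measurable_const.sub (measurable_pi_apply 1))).add measurable_const)
  -- integrability for Iop pieces
  have hiI1 : Integrable (fun u : ℝ => (x - ![u,0]) 0 + (x - ![u,0]) 1 + k)
      (μ1.restrict ((fun u : ℝ => ![u,0]) ⁻¹' Set.Iic x)) := by
    rw [hpre1]
    have heq : (fun u : ℝ => (x - ![u,0]) 0 + (x - ![u,0]) 1 + k)
        = fun u => (A - u) + B + k := by
      funext u; simp [Pi.sub_apply]; rfl
    rw [heq]
    refine Integrable.mono' (integrable_const (A + B + k))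
      ((((continuous_const.sub continuous_id).add continuous_const).add
        continuous_const).aestronglyMeasurable) ?_
    filter_upwards [ae_restrict_mem measurableSet_Iic, ae_restrict_of_ae hae1]
      with u hu hupos
    rw [Real.norm_eq_abs, abs_le]
    constructor
    · simp only [Set.mem_Iic] at hu; nlinarith
    · simp only [Set.mem_Iic] at hu; nlinarith
  have hiI2 : Integrable (fun u : ℝ => (x - ![0,u]) 0 + (x - ![0,u]) 1 + k)
      (μ2.restrict ((fun u : ℝ => ![0,u]) ⁻¹' Set.Iic x)) := by
    rw [hpre2]
    have heq : (fun u : ℝ => (x - ![0,u]) 0 + (x - ![0,u]) 1 + k)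
        = fun u => A + (B - u) + k := by
      funext u; simp [Pi.sub_apply]; rfl
    rw [heq]
    refine Integrable.mono' (integrable_const (A + B + k))
      (((continuous_const.add (continuous_const.sub continuous_id)).add
        continuous_const).aestronglyMeasurable) ?_
    filter_upwards [ae_restrict_mem measurableSet_Iic, ae_restrict_of_ae hae2]
      with u hu hupos
    rw [Real.norm_eq_abs, abs_le]
    constructor
    · simp only [Set.mem_Iic] at hu; nlinarith
    · simp only [Set.mem_Iic] at hu; nlinarith
  -- Iop value
  set I1 := ∫ u in Set.Iic A, ((x - ![u,0]) 0 + (x - ![u,0]) 1 + k) ∂μ1 with hI1def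
  set I2 := ∫ u in Set.Iic B, ((x - ![0,u]) 0 + (x - ![0,u]) 1 + k) ∂μ2 with hI2def
  have hIop : Iop 2 (lam1 + lam2) (Fmix lam1 lam2 μ1 μ2)
      (fun y : Fin 2 → ℝ => y 0 + y 1 + k) x = lam1 * I1 + lam2 * I2 := by
    rw [Iop, hs_eq]
    rw [show (∫ α in Set.Iic x, (fun y : Fin 2 → ℝ => y 0 + y 1 + k) (x - α)
        ∂(Fmix lam1 lam2 μ1 μ2))
      = ∫ α in Set.Iic x, ((x - α) 0 + (x - α) 1 + k) ∂(Fmix lam1 lam2 μ1 μ2) from rfl]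
    rw [mix_integral lam1 lam2 hlam1.le hlam2.le μ1 μ2 _ measurableSet_Iic _ hgI hiI1 hiI2]
    rw [hpre1, hpre2, ← hI1def, ← hI2def]
    field_simp
  -- integrand of Rpen
  have hgR : Measurable (upsilon2 V1 V2 x) := by
    unfold upsilon2
    apply Measurable.neg
    apply Measurable.add
    · exact Measurable.ite (measurableSet_lt measurable_const (measurable_pi_apply 0))
        measurable_const measurable_const
    · exact Measurable.ite (measurableSet_lt measurable_const (measurable_pi_apply 1))
        measurable_const measurable_const
  have hboundR : ∀ (α : Fin 2 → ℝ), ‖upsilon2 V1 V2 x α‖ ≤ V2 B + V1 A := by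
    intro α
    have h1 := hV1nonneg A hx0
    have h2 := hV2nonneg B hx1
    rw [upsilon2, Real.norm_eq_abs, abs_le]
    constructor <;> [skip; skip] <;> (split_ifs <;> simp <;> linarith)
  have hiR1 : Integrable (fun u : ℝ => upsilon2 V1 V2 x ![u,0])
      (μ1.restrict ((fun u : ℝ => ![u,0]) ⁻¹' (Set.Iic x)ᶜ)) := by
    refine Integrable.mono' (integrable_const (V2 B + V1 A))
      ((hgR.comp meas_f1).aestronglyMeasurable) ?_
    exact ae_of_all _ fun u => hboundR _
  have hiR2 : Integrable (fun u : ℝ => upsilon2 V1 V2 x ![0,u])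
      (μ2.restrict ((fun u : ℝ => ![0,u]) ⁻¹' (Set.Iic x)ᶜ)) := by
    refine Integrable.mono' (integrable_const (V2 B + V1 A))
      ((hgR.comp meas_f2).aestronglyMeasurable) ?_
    exact ae_of_all _ fun u => hboundR _
  -- Rpen value
  have hR1 : ∫ u in Set.Ioi A, upsilon2 V1 V2 x ![u,0] ∂μ1 = m1' * (-(V2 B)) := by
    have heq : ∀ u ∈ Set.Ioi A, upsilon2 V1 V2 x ![u,0] = -(V2 B) := by
      intro u hu
      rw [upsilon2]
      simp only [Matrix.cons_val_zero, Matrix.cons_val_one, Matrix.head_cons]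
      change -((if x 0 < u then V2 (x 1) else 0) + (if x 1 < (0:ℝ) then V1 (x 0) else 0)) = -(V2 B)
      rw [if_pos (show x 0 < u from hu), if_neg (show ¬ x 1 < (0:ℝ) from not_lt.2 hx1)]
      ring
    rw [setIntegral_congr_fun measurableSet_Ioi heq, setIntegral_const, smul_eq_mul]; rfl
  have hR2 : ∫ u in Set.Ioi B, upsilon2 V1 V2 x ![0,u] ∂μ2 = m2' * (-(V1 A)) := by
    have heq : ∀ u ∈ Set.Ioi B, upsilon2 V1 V2 x ![0,u] = -(V1 A) := by
      intro u hu
      rw [upsilon2]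
      simp only [Matrix.cons_val_zero, Matrix.cons_val_one, Matrix.head_cons]
      change -((if x 0 < (0:ℝ) then V2 (x 1) else 0) + (if x 1 < u then V1 (x 0) else 0)) = -(V1 A)
      rw [if_pos (show x 1 < u from hu), if_neg (show ¬ x 0 < (0:ℝ) from not_lt.2 hx0)]
      ring
    rw [setIntegral_congr_fun measurableSet_Ioi heq, setIntegral_const, smul_eq_mul]; rfl
  have hRpen : Rpen 2 (lam1 + lam2) (Fmix lam1 lam2 μ1 μ2) (upsilon2 V1 V2) x
      = -(lam1 * (V2 B * m1') + lam2 * (V1 A * m2')) := by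
    rw [Rpen, hsc_eq]
    rw [mix_integral lam1 lam2 hlam1.le hlam2.le μ1 μ2 _ measurableSet_Iic.compl _ hgR hiR1 hiR2]
    rw [hpre1c, hpre2c, hR1, hR2]
    field_simp
    ring
  -- the derivative sum
  have hsum : (∑ i, p i * fderiv ℝ (fun y : Fin 2 → ℝ => y 0 + y 1 + k) x (Pi.single i 1))
      = p 0 + p 1 := by
    rw [Fin.sum_univ_two, fderiv_Wk, fderiv_Wk, mul_one, mul_one]
  -- bounds on I1 I2
  have hI1b : I1 ≤ (A + B + k) * m1 := by
    have heq : (fun u : ℝ => (x - ![u,0]) 0 + (x - ![u,0]) 1 + k)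
        = fun u => (A - u) + B + k := by
      funext u; simp [Pi.sub_apply]; rfl
    have hint : Integrable (fun u : ℝ => (A - u) + B + k) (μ1.restrict (Set.Iic A)) := by
      have := hiI1; rw [hpre1, heq] at this; exact this
    calc I1 = ∫ u in Set.Iic A, ((A - u) + B + k) ∂μ1 := by rw [hI1def, heq]
      _ ≤ ∫ _u in Set.Iic A, (A + B + k) ∂μ1 := by
          refine integral_mono_ae hint (integrable_const _) ?_
          filter_upwards [ae_restrict_of_ae hae1] with u hupos
          linarith
      _ = m1 * (A + B + k) := by rw [setIntegral_const, smul_eq_mul]; rfl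
      _ = (A + B + k) * m1 := by ring
  have hI2b : I2 ≤ (A + B + k) * m2 := by
    have heq : (fun u : ℝ => (x - ![0,u]) 0 + (x - ![0,u]) 1 + k)
        = fun u => A + (B - u) + k := by
      funext u; simp [Pi.sub_apply]; rfl
    have hint : Integrable (fun u : ℝ => A + (B - u) + k) (μ2.restrict (Set.Iic B)) := by
      have := hiI2; rw [hpre2, heq] at this; exact this
    calc I2 = ∫ u in Set.Iic B, (A + (B - u) + k) ∂μ2 := by rw [hI2def, heq]
      _ ≤ ∫ _u in Set.Iic B, (A + B + k) ∂μ2 := by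
          refine integral_mono_ae hint (integrable_const _) ?_
          filter_upwards [ae_restrict_of_ae hae2] with u hupos
          linarith
      _ = m2 * (A + B + k) := by rw [setIntegral_const, smul_eq_mul]; rfl
      _ = (A + B + k) * m2 := by ring
  -- finish
  have hLop : Lop 2 p (lam1 + lam2) c (Fmix lam1 lam2 μ1 μ2) (upsilon2 V1 V2)
      (fun y : Fin 2 → ℝ => y 0 + y 1 + k) x
      = p 0 + p 1 - (c + (lam1 + lam2)) * (A + B + k) + (lam1 * I1 + lam2 * I2)
        + (lam1 * (V2 B * m1') + lam2 * (V1 A * m2')) := by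
    rw [Lop, hsum, hIop, hRpen]
    ring
  rw [hLop]
  exact final_ineq (p 0) (p 1) lam1 lam2 c k0 k A B I1 I2 m1 m1' m2 m2' (V1 A) (V2 B)
    hp01 hk hk0pos hx0 hx1 hc hlam1 hlam2 hI1b hI2b hm1sum hm2sum
    ENNReal.toReal_nonneg ENNReal.toReal_nonneg ENNReal.toReal_nonneg ENNReal.toReal_nonneg
    (le_of_lt (hbV2 B hx1)) (le_of_lt (hbV1 A hx0))

/-- in the two-company setting, each `W_k(x) = x₁ + x₂ + k`, `k ≥ k₀`, solves
the HJB equation classically; in particular the HJB equation admits infinitely many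
classical solutions. -/
theorem stmt5 (p : Fin 2 → ℝ) (hp : ∀ i, 0 < p i)
    (lam1 lam2 c : ℝ) (hlam1 : 0 < lam1) (hlam2 : 0 < lam2) (hc : 0 < c)
    (μ1 μ2 : Measure ℝ) [IsProbabilityMeasure μ1] [IsProbabilityMeasure μ2]
    (hμ1supp : μ1 (Set.Iic 0) = 0) (hμ2supp : μ2 (Set.Iic 0) = 0)
    (hμ1cont : ∀ x : ℝ, μ1 {x} = 0) (hμ2cont : ∀ x : ℝ, μ2 {x} = 0)
    (V1 V2 VM : ℝ → ℝ)
    (hV1mono : MonotoneOn V1 (Set.Ici 0)) (hV2mono : MonotoneOn V2 (Set.Ici 0))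
    (hVMmono : MonotoneOn VM (Set.Ici 0))
    (hV1cont : ContinuousOn V1 (Set.Ici 0)) (hV2cont : ContinuousOn V2 (Set.Ici 0))
    (hVMcont : ContinuousOn VM (Set.Ici 0))
    (hV1nonneg : ∀ z, 0 ≤ z → 0 ≤ V1 z) (hV2nonneg : ∀ z, 0 ≤ z → 0 ≤ V2 z)
    (hVMnonneg : ∀ z, 0 ≤ z → 0 ≤ VM z)
    (cM : ℝ) (hcM : 0 ≤ cM)
    (k0 : ℝ) (hk0 : (p 0 + p 1) / c < k0)
    (hbV1 : ∀ z, 0 ≤ z → V1 z < z + k0)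
    (hbV2 : ∀ z, 0 ≤ z → V2 z < z + k0)
    (hbVM : ∀ z, 0 ≤ z → VM z < z + cM + k0) :
    (∀ k, k0 ≤ k →
      ContDiff ℝ 1 (fun x : Fin 2 → ℝ => x 0 + x 1 + k) ∧
      ∀ x : Fin 2 → ℝ, 0 ≤ x →
        (∀ i : Fin 2,
          fderiv ℝ (fun y : Fin 2 → ℝ => y 0 + y 1 + k) x (Pi.single i 1) = 1) ∧
        fmerge VM cM x - (x 0 + x 1 + k) < 0 ∧
        Lop 2 p (lam1 + lam2) c (Fmix lam1 lam2 μ1 μ2) (upsilon2 V1 V2)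
          (fun y : Fin 2 → ℝ => y 0 + y 1 + k) x < 0 ∧
        max (max
            (1 - fderiv ℝ (fun y : Fin 2 → ℝ => y 0 + y 1 + k) x (Pi.single 0 1))
            (1 - fderiv ℝ (fun y : Fin 2 → ℝ => y 0 + y 1 + k) x (Pi.single 1 1)))
          (max
            (Lop 2 p (lam1 + lam2) c (Fmix lam1 lam2 μ1 μ2) (upsilon2 V1 V2)
              (fun y : Fin 2 → ℝ => y 0 + y 1 + k) x)
            (fmerge VM cM x - (x 0 + x 1 + k))) = 0) ∧
    {W : (Fin 2 → ℝ) → ℝ | ContDiff ℝ 1 W ∧ ∀ x : Fin 2 → ℝ, 0 ≤ x →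
      max (max
          (1 - fderiv ℝ W x (Pi.single 0 1))
          (1 - fderiv ℝ W x (Pi.single 1 1)))
        (max
          (Lop 2 p (lam1 + lam2) c (Fmix lam1 lam2 μ1 μ2) (upsilon2 V1 V2) W x)
          (fmerge VM cM x - W x)) = 0}.Infinite := by
  have hk0pos : 0 < k0 := lt_trans (div_pos (by linarith [hp 0, hp 1]) hc) hk0
  have hmain : ∀ k, k0 ≤ k →
      ContDiff ℝ 1 (fun x : Fin 2 → ℝ => x 0 + x 1 + k) ∧
      ∀ x : Fin 2 → ℝ, 0 ≤ x →
        (∀ i : Fin 2,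
          fderiv ℝ (fun y : Fin 2 → ℝ => y 0 + y 1 + k) x (Pi.single i 1) = 1) ∧
        fmerge VM cM x - (x 0 + x 1 + k) < 0 ∧
        Lop 2 p (lam1 + lam2) c (Fmix lam1 lam2 μ1 μ2) (upsilon2 V1 V2)
          (fun y : Fin 2 → ℝ => y 0 + y 1 + k) x < 0 ∧
        max (max
            (1 - fderiv ℝ (fun y : Fin 2 → ℝ => y 0 + y 1 + k) x (Pi.single 0 1))
            (1 - fderiv ℝ (fun y : Fin 2 → ℝ => y 0 + y 1 + k) x (Pi.single 1 1)))
          (max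
            (Lop 2 p (lam1 + lam2) c (Fmix lam1 lam2 μ1 μ2) (upsilon2 V1 V2)
              (fun y : Fin 2 → ℝ => y 0 + y 1 + k) x)
            (fmerge VM cM x - (x 0 + x 1 + k))) = 0 := by
    intro k hk
    refine ⟨contDiff_Wk k, fun x hx => ?_⟩
    have hx0 : 0 ≤ x 0 := hx 0
    have hx1 : 0 ≤ x 1 := hx 1
    have hL := lop_neg p hp lam1 lam2 c hlam1 hlam2 hc μ1 μ2 hμ1supp hμ2supp
      V1 V2 hV1nonneg hV2nonneg k0 hk0 hbV1 hbV2 k hk x hx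
    have hf : fmerge VM cM x - (x 0 + x 1 + k) < 0 := by
      rw [fmerge]
      split_ifs with h
      · have h0 : 0 ≤ x 0 + x 1 - cM := by linarith
        have := hbVM _ h0
        linarith
      · linarith
    refine ⟨fun i => fderiv_Wk k x i, hf, hL, ?_⟩
    rw [fderiv_Wk, fderiv_Wk, sub_self, max_self]
    exact max_eq_left (max_le hL.le hf.le)
  refine ⟨hmain, ?_⟩
  have hsub : (fun k => fun x : Fin 2 → ℝ => x 0 + x 1 + k) '' Set.Ici k0 ⊆
      {W : (Fin 2 → ℝ) → ℝ | ContDiff ℝ 1 W ∧ ∀ x : Fin 2 → ℝ, 0 ≤ x →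
        max (max
            (1 - fderiv ℝ W x (Pi.single 0 1))
            (1 - fderiv ℝ W x (Pi.single 1 1)))
          (max
            (Lop 2 p (lam1 + lam2) c (Fmix lam1 lam2 μ1 μ2) (upsilon2 V1 V2) W x)
            (fmerge VM cM x - W x)) = 0} := by
    rintro W ⟨k, hk, rfl⟩
    exact ⟨(hmain k hk).1, fun x hx => ((hmain k hk).2 x hx).2.2.2⟩
  refine Set.Infinite.mono hsub ?_
  refine Set.Infinite.image ?_ (Set.Ici_infinite k0)
  intro k1 _ k2 _ h
  have := congrFun h (fun _ => 0)
  simpa using this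

end
end

section
/- Let S(x) := sup{ −υ(x,α) : α ∈ ℝ_+^n, x − α ∉ ℝ_+^n } and assume that f and S satisfy the growth condition GC. Then there exists b_0 > 0 such that for every b ≥ b_0 the continuously differentiable function W = b·h_0 is a classical supersolution of the HJB equation on ℝ_+^n, i.e. for every x ∈ ℝ_+^n: a_i − ∂_{x_i}(b h_0)(x) ≤ 0 for all i, L(b h_0)(x) ≤ 0, and f(x) − b h_0(x) ≤ 0. -/
open MeasureTheory Filter

noncomputable section

/-- The reference growth function `h₀(x) = exp((c/(2n)) Σᵢ xᵢ/pᵢ)`. -/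
def hGrow (n : ℕ) (p : Fin n → ℝ) (c : ℝ) (x : Fin n → ℝ) : ℝ :=
  Real.exp (c / (2 * n) * ∑ i, x i / p i)

/-- The growth condition GC: `h/h₀` is bounded above on `ℝ₊ⁿ`. -/
def GrowthGC (n : ℕ) (p : Fin n → ℝ) (c : ℝ) (h : (Fin n → ℝ) → ℝ) : Prop :=
  ∃ M : ℝ, ∀ x : Fin n → ℝ, 0 ≤ x → h x / hGrow n p c x ≤ M

/-- `S(x) = sup{−υ(x,α) : α ∈ ℝ₊ⁿ, x − α ∉ ℝ₊ⁿ}`. -/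
def Spen (n : ℕ) (υ : (Fin n → ℝ) → (Fin n → ℝ) → ℝ) (x : Fin n → ℝ) : ℝ :=
  sSup {y : ℝ | ∃ α : Fin n → ℝ, 0 ≤ α ∧ ¬ 0 ≤ x - α ∧ y = -υ x α}

lemma hGrow_pos (n : ℕ) (p : Fin n → ℝ) (c : ℝ) (x : Fin n → ℝ) : 0 < hGrow n p c x :=
  Real.exp_pos _

lemma hGrow_hasFDerivAt (n : ℕ) (p : Fin n → ℝ) (c : ℝ) (x : Fin n → ℝ) :
    HasFDerivAt (hGrow n p c)
      (hGrow n p c x • ((c / (2 * n)) •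
        (∑ i, (p i)⁻¹ • (ContinuousLinearMap.proj i : (Fin n → ℝ) →L[ℝ] ℝ)))) x := by
  set L : (Fin n → ℝ) →L[ℝ] ℝ := ∑ i, (p i)⁻¹ • (ContinuousLinearMap.proj i) with hLdef
  have hLapp : ∀ y : Fin n → ℝ, L y = ∑ i, y i / p i := by
    intro y
    simp [hLdef, ContinuousLinearMap.sum_apply, div_eq_inv_mul]
  have hL : HasFDerivAt (fun y : Fin n → ℝ => c / (2*(n:ℝ)) * L y)
      ((c / (2*n)) • L) x := (L.hasFDerivAt).const_mul _
  have h2 := hL.exp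
  have : (fun y : Fin n → ℝ => Real.exp (c / (2*(n:ℝ)) * L y)) = hGrow n p c := by
    funext y; simp [hGrow, hLapp]
  rw [this] at h2
  simpa [hGrow, hLapp] using h2

lemma fderiv_bhGrow (n : ℕ) (p : Fin n → ℝ) (c b : ℝ) (x : Fin n → ℝ) (i : Fin n) :
    fderiv ℝ (fun y => b * hGrow n p c y) x (Pi.single i 1)
      = b * hGrow n p c x * (c / (2 * n)) * (p i)⁻¹ := by
  have h := ((hGrow_hasFDerivAt n p c x).const_mul b).fderiv
  rw [h]
  simp [ContinuousLinearMap.sum_apply, Pi.single_apply, mul_ite,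
    Finset.sum_ite_eq', smul_smul, mul_assoc]

set_option maxHeartbeats 1000000 in
/-- if `f` and `S` satisfy GC then `b·h₀` is a classical supersolution of the
HJB equation for all `b` large enough. -/
theorem stmt6 (n : ℕ) (hn : 1 ≤ n) (p a : Fin n → ℝ)
    (hp : ∀ i, 0 < p i) (ha : ∀ i, 0 < a i)
    (lam c : ℝ) (hlam : 0 < lam) (hc : 0 < c)
    (F : Measure (Fin n → ℝ)) [IsProbabilityMeasure F]
    (hFpos : F {α | ¬ 0 ≤ α} = 0) (hF0 : F {0} = 0)
    (hFmom : Integrable (fun α => ‖α‖) F)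
    (υ : (Fin n → ℝ) → (Fin n → ℝ) → ℝ) (hυmeas : Measurable (Function.uncurry υ))
    (hυint : Integrable (fun α => |υ 0 α|) F)
    (hυx : ∀ α x₁ x₂ : Fin n → ℝ, x₁ ≤ x₂ → υ x₂ α ≤ υ x₁ α)
    (hυα : ∀ x α₁ α₂ : Fin n → ℝ, α₁ ≤ α₂ → υ x α₁ ≤ υ x α₂)
    (hRcont : ContinuousOn (Rpen n lam F υ) {x | 0 ≤ x})
    (f : (Fin n → ℝ) → ℝ)
    (hfGC : GrowthGC n p c f) (hSGC : GrowthGC n p c (Spen n υ)) :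
    ∃ b0 : ℝ, 0 < b0 ∧ ∀ b, b0 ≤ b → ∀ x : Fin n → ℝ, 0 ≤ x →
      (∀ i, a i - fderiv ℝ (fun y => b * hGrow n p c y) x (Pi.single i 1) ≤ 0) ∧
      Lop n p lam c F υ (fun y => b * hGrow n p c y) x ≤ 0 ∧
      f x - b * hGrow n p c x ≤ 0 := by
  obtain ⟨Mf, hMf⟩ := hfGC
  obtain ⟨MS, hMS⟩ := hSGC
  have hnpos : (0:ℝ) < (n:ℝ) := by exact_mod_cast Nat.lt_of_lt_of_le Nat.zero_lt_one hn
  have hκ : 0 < c / (2 * (n:ℝ)) := by positivity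
  set κ := c / (2 * (n:ℝ)) with hκdef
  have hsum0 : 0 ≤ ∑ i, a i * p i / κ :=
    Finset.sum_nonneg fun i _ => div_nonneg (mul_nonneg (ha i).le (hp i).le) hκ.le
  have hmax1 : (0:ℝ) ≤ max Mf 0 := le_max_right _ _
  have hmax2 : (0:ℝ) ≤ 2*lam*(max MS 0)/c :=
    div_nonneg (mul_nonneg (by linarith) (le_max_right _ _)) hc.le
  refine ⟨1 + (∑ i, a i * p i / κ) + max Mf 0 + 2*lam*(max MS 0)/c, by linarith, ?_⟩
  intro b hb x hx
  have hh0 : 0 < hGrow n p c x := hGrow_pos n p c x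
  have hh1 : 1 ≤ hGrow n p c x := by
    apply Real.one_le_exp
    exact mul_nonneg hκ.le (Finset.sum_nonneg fun i _ => div_nonneg (hx i) (hp i).le)
  have hb1 : 1 ≤ b := by linarith
  have hbpos : 0 < b := by linarith
  have hbi : ∀ i, a i * p i / κ ≤ b := by
    intro i
    have := Finset.single_le_sum (f := fun i => a i * p i / κ)
      (fun j _ => div_nonneg (mul_nonneg (ha j).le (hp j).le) hκ.le) (Finset.mem_univ i)
    linarith
  have hbMf : max Mf 0 ≤ b := by linarith
  have hbS : 2*lam*(max MS 0)/c ≤ b := by linarith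
  have haepos : ∀ᵐ α ∂F, 0 ≤ α := ae_iff.mpr hFpos
  have hs1 : MeasurableSet {α : Fin n → ℝ | 0 ≤ x - α} := by
    have he : {α : Fin n → ℝ | 0 ≤ x - α} = ⋂ i, {α : Fin n → ℝ | α i ≤ x i} := by
      ext α
      simp only [Set.mem_setOf_eq, Set.mem_iInter, Pi.le_def, Pi.sub_apply, Pi.zero_apply,
        sub_nonneg]
    rw [he]
    exact MeasurableSet.iInter fun i =>
      measurableSet_le (measurable_pi_apply i) measurable_const
  have hs2 : MeasurableSet {α : Fin n → ℝ | ¬ 0 ≤ x - α} := hs1.compl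
  refine ⟨?_, ?_, ?_⟩
  · -- derivative condition
    intro i
    rw [fderiv_bhGrow]
    have h1 : a i * p i ≤ b * κ := by
      have h := hbi i
      rwa [div_le_iff₀ hκ] at h
    have key : a i * p i ≤ b * hGrow n p c x * κ := by
      nlinarith [mul_nonneg (mul_pos hbpos hκ).le (sub_nonneg.mpr hh1)]
    have h2 : a i ≤ b * hGrow n p c x * κ / p i := (le_div_iff₀ (hp i)).mpr key
    rw [div_eq_mul_inv] at h2
    rw [← hκdef]
    linarith
  · -- HJB inequality
    have hderiv : ∀ i : Fin n, fderiv ℝ (fun y => b * hGrow n p c y) x (Pi.single i 1)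
        = b * hGrow n p c x * κ * (p i)⁻¹ := by
      intro i; rw [fderiv_bhGrow, ← hκdef]
    have hsum : (∑ i, p i * fderiv ℝ (fun y => b * hGrow n p c y) x (Pi.single i 1))
        = (c/2) * (b * hGrow n p c x) := by
      have hterm : ∀ i : Fin n, p i * fderiv ℝ (fun y => b * hGrow n p c y) x (Pi.single i 1)
          = b * hGrow n p c x * κ := by
        intro i
        rw [hderiv i]
        field_simp
        exact div_self (ne_of_gt (hp i))
      rw [Finset.sum_congr rfl (fun i _ => hterm i), Finset.sum_const, Finset.card_univ,
        Fintype.card_fin, nsmul_eq_mul, hκdef]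
      have hn0 : (n:ℝ) ≠ 0 := ne_of_gt hnpos
      field_simp
    -- bound on Iop
    have hIle : Iop n lam F (fun y => b * hGrow n p c y) x ≤ lam * (b * hGrow n p c x) := by
      unfold Iop
      show lam * ∫ α in {α : Fin n → ℝ | 0 ≤ x - α}, b * hGrow n p c (x - α) ∂F
          ≤ lam * (b * hGrow n p c x)
      have hbound : ∀ᵐ α ∂F, α ∈ {α : Fin n → ℝ | 0 ≤ x - α} →
          b * hGrow n p c (x - α) ≤ b * hGrow n p c x := by
        filter_upwards [haepos] with α hα _
        have hmono : hGrow n p c (x - α) ≤ hGrow n p c x := by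
          apply Real.exp_le_exp.mpr
          apply mul_le_mul_of_nonneg_left _ hκ.le
          apply Finset.sum_le_sum
          intro i _
          have h0i : (0:ℝ) ≤ α i := hα i
          have hle : (x - α) i ≤ x i := by
            simp only [Pi.sub_apply]; linarith
          exact (div_le_div_iff_of_pos_right (hp i)).mpr hle
        nlinarith
      have hcont : Continuous (fun α : Fin n → ℝ => b * hGrow n p c (x - α)) := by
        unfold hGrow; fun_prop
      have hint : IntegrableOn (fun α : Fin n → ℝ => b * hGrow n p c (x - α))
          {α : Fin n → ℝ | 0 ≤ x - α} F := by
        apply Integrable.mono' (g := fun _ => b * hGrow n p c x)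
          (integrable_const _) hcont.aestronglyMeasurable.restrict
        filter_upwards [(ae_restrict_iff' hs1).mpr hbound] with α h1
        rw [Real.norm_eq_abs, abs_of_nonneg (mul_nonneg hbpos.le (hGrow_pos n p c _).le)]
        exact h1

      have hintc : IntegrableOn (fun _ : Fin n → ℝ => b * hGrow n p c x)
          {α : Fin n → ℝ | 0 ≤ x - α} F :=
        (integrable_const _).integrableOn
      have h1 : ∫ α in {α : Fin n → ℝ | 0 ≤ x - α}, b * hGrow n p c (x - α) ∂F
          ≤ ∫ _α in {α : Fin n → ℝ | 0 ≤ x - α}, b * hGrow n p c x ∂F :=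
        setIntegral_mono_on_ae hint hintc hs1 hbound
      have h2 : ∫ _α in {α : Fin n → ℝ | 0 ≤ x - α}, b * hGrow n p c x ∂F
          = (F {α : Fin n → ℝ | 0 ≤ x - α}).toReal * (b * hGrow n p c x) := by
        rw [setIntegral_const, smul_eq_mul]; rfl
      have h3 : (F {α : Fin n → ℝ | 0 ≤ x - α}).toReal ≤ 1 := by
        simpa using ENNReal.toReal_mono ENNReal.one_ne_top (prob_le_one)
      have h4 : (0:ℝ) ≤ (F {α : Fin n → ℝ | 0 ≤ x - α}).toReal := ENNReal.toReal_nonneg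
      have hbh : (0:ℝ) ≤ b * hGrow n p c x := mul_nonneg hbpos.le hh0.le
      have h5 : ∫ α in {α : Fin n → ℝ | 0 ≤ x - α}, b * hGrow n p c (x - α) ∂F
          ≤ b * hGrow n p c x := by
        nlinarith [mul_nonneg (sub_nonneg.mpr h3) hbh]
      exact mul_le_mul_of_nonneg_left h5 hlam.le
    -- bound on Rpen
    have hRge : -((c/2) * (b * hGrow n p c x)) ≤ Rpen n lam F υ x := by
      unfold Rpen
      have hch : (0:ℝ) ≤ (c/2) * (b * hGrow n p c x) := by positivity
      by_cases hi : IntegrableOn (fun α => υ x α) {α : Fin n → ℝ | ¬ 0 ≤ x - α} F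
      · set M2 := max (Spen n υ x) 0 with hM2
        have hM2nn : 0 ≤ M2 := le_max_right _ _
        have hbd : ∀ᵐ α ∂F, α ∈ {α : Fin n → ℝ | ¬ 0 ≤ x - α} → -M2 ≤ υ x α := by
          filter_upwards [haepos] with α hα hmem
          have hBdd : BddAbove {y : ℝ | ∃ β : Fin n → ℝ, 0 ≤ β ∧ ¬ 0 ≤ x - β ∧ y = -υ x β} := by
            refine ⟨-υ x 0, ?_⟩
            rintro y ⟨β, hβ, _, rfl⟩
            exact neg_le_neg (hυα x 0 β hβ)
          have hmem' : -υ x α ∈ {y : ℝ | ∃ β : Fin n → ℝ, 0 ≤ β ∧ ¬ 0 ≤ x - β ∧ y = -υ x β} :=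
            ⟨α, hα, hmem, rfl⟩
          have hsup : -υ x α ≤ Spen n υ x := le_csSup hBdd hmem'
          have h7 : -υ x α ≤ M2 := le_trans hsup (le_max_left _ _)
          exact neg_le.mp h7
        have hintc : IntegrableOn (fun _ : Fin n → ℝ => -M2)
            {α : Fin n → ℝ | ¬ 0 ≤ x - α} F :=
          (integrable_const _).integrableOn
        have h1 : ∫ _α in {α : Fin n → ℝ | ¬ 0 ≤ x - α}, (-M2) ∂F
            ≤ ∫ α in {α : Fin n → ℝ | ¬ 0 ≤ x - α}, υ x α ∂F :=
          setIntegral_mono_on_ae hintc hi hs2 hbd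
        have h2 : ∫ _α in {α : Fin n → ℝ | ¬ 0 ≤ x - α}, (-M2) ∂F
            = (F {α : Fin n → ℝ | ¬ 0 ≤ x - α}).toReal * (-M2) := by
          rw [setIntegral_const, smul_eq_mul]; rfl
        have h3 : (F {α : Fin n → ℝ | ¬ 0 ≤ x - α}).toReal ≤ 1 := by
          simpa using ENNReal.toReal_mono ENNReal.one_ne_top (prob_le_one)
        have h4 : (0:ℝ) ≤ (F {α : Fin n → ℝ | ¬ 0 ≤ x - α}).toReal := ENNReal.toReal_nonneg
        have hlow : -M2 ≤ ∫ α in {α : Fin n → ℝ | ¬ 0 ≤ x - α}, υ x α ∂F := by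
          nlinarith [mul_nonneg (sub_nonneg.mpr h3) hM2nn, h1, h2]
        have hS : Spen n υ x ≤ MS * hGrow n p c x := by
          have h := hMS x hx
          rwa [div_le_iff₀ hh0] at h
        have h5 : M2 ≤ max MS 0 * hGrow n p c x := by
          apply max_le
          · exact le_trans hS (mul_le_mul_of_nonneg_right (le_max_left MS 0) hh0.le)
          · exact mul_nonneg (le_max_right MS 0) hh0.le
        have h6 : lam * (max MS 0) ≤ (c/2) * b := by
          rw [div_le_iff₀ hc] at hbS
          linarith
        nlinarith [mul_le_mul_of_nonneg_left hlow hlam.le,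
          mul_le_mul_of_nonneg_left h5 hlam.le,
          mul_le_mul_of_nonneg_right h6 hh0.le]
      · rw [integral_undef hi, mul_zero]
        linarith
    unfold Lop
    rw [hsum]
    show c/2 * (b * hGrow n p c x) - (c + lam) * (b * hGrow n p c x)
        + Iop n lam F (fun y => b * hGrow n p c y) x - Rpen n lam F υ x ≤ 0
    linarith [hIle, hRge]
  · -- f condition
    have h1 : f x ≤ Mf * hGrow n p c x := by
      have h := hMf x hx
      rwa [div_le_iff₀ hh0] at h
    have h2 : Mf * hGrow n p c x ≤ b * hGrow n p c x := by
      have : Mf ≤ b := le_trans (le_max_left _ _) hbMf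
      nlinarith
    linarith

end
end

section
/- Let δ > 0 and let v : ℕ_0^n → [0,∞) satisfy v(m+e_i) − v(m) ≥ a_i p_i δ for every i and v(m+1) − v(m) ≤ v(m)(e^{(c+λ)δ} − 1) for every m ∈ ℕ_0^n. Define the extension V(x) := v(ρ^δ(x)) + a·(x − ⟨x⟩^δ) for x ∈ ℝ_+^n. Then for all x, y ∈ ℝ_+^n, |V(y) − V(x)| ≤ ‖⟨y⟩^δ − ⟨x⟩^δ‖_1 · (2/p̂) · V(⟨x∨y⟩^δ) · ((e^{(c+λ)δ} − 1)/δ) + 2δ a·p, where x∨y is the componentwise maximum, ‖·‖_1 is the ℓ¹ norm and p̂ = min_i p_i. -/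
open MeasureTheory Filter

noncomputable section

/-- The extension `V(x) = v(ρ^δ(x)) + a·(x − ⟨x⟩^δ)` of a grid function `v`. -/
def Vext (n : ℕ) (p a : Fin n → ℝ) (δ : ℝ) (v : (Fin n → ℕ) → ℝ) (x : Fin n → ℝ) : ℝ :=
  v (rho n p δ x) + ∑ i, a i * (x i - proj n p δ x i)

lemma mono_aux {n : ℕ} (v : (Fin n → ℕ) → ℝ)
    (hstep : ∀ m (i : Fin n), v m ≤ v (m + Pi.single i 1)) :
    ∀ (N : ℕ) (k m : Fin n → ℕ), (∑ i, k i) = N → v m ≤ v (m + k) := by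
  intro N
  induction N with
  | zero =>
    intro k m hk
    have hk0 : k = 0 := by
      funext i
      exact Finset.sum_eq_zero_iff.mp hk i (Finset.mem_univ i)
    simp [hk0]
  | succ N ih =>
    intro k m hk
    have hex : ∃ i, k i ≠ 0 := by
      by_contra h
      push_neg at h
      have : ∑ i, k i = 0 := Finset.sum_eq_zero (fun i _ => h i)
      omega
    obtain ⟨i, hi⟩ := hex
    set k' : Fin n → ℕ := k - Pi.single i 1 with hk'def
    have hk' : k' + Pi.single i 1 = k := by
      funext j
      by_cases hj : j = i
      · subst hj
        simp only [hk'def, Pi.add_apply, Pi.sub_apply, Pi.single_eq_same]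
        omega
      · simp [hk'def, Pi.sub_apply, Pi.single_eq_of_ne hj]
    have hsum : ∑ j, k' j = N := by
      have h1 := congrArg (fun f : Fin n → ℕ => ∑ j, f j) hk'
      simp only [Pi.add_apply, Finset.sum_add_distrib] at h1
      rw [Finset.sum_pi_single'] at h1
      simp at h1
      omega
    calc v m ≤ v (m + Pi.single i 1) := hstep m i
      _ ≤ v (m + Pi.single i 1 + k') := ih _ _ hsum
      _ = v (m + k) := by rw [add_assoc, add_comm (Pi.single i 1), hk']


lemma chain_aux {n : ℕ} (v : (Fin n → ℕ) → ℝ) (K : ℝ) (hK : 0 ≤ K)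
    (hmono : ∀ (k m : Fin n → ℕ), v m ≤ v (m + k))
    (hub : ∀ m (i : Fin n), v (m + Pi.single i 1) ≤ v m + v m * K) :
    ∀ (N : ℕ) (k m : Fin n → ℕ), (∑ i, k i) = N →
      v (m + k) ≤ v m + (∑ i, (k i : ℝ)) * (v (m + k) * K) := by
  intro N
  induction N with
  | zero =>
    intro k m hk
    have hk0 : k = 0 := by
      funext i
      exact Finset.sum_eq_zero_iff.mp hk i (Finset.mem_univ i)
    simp [hk0]
  | succ N ih =>
    intro k m hk
    have hex : ∃ i, k i ≠ 0 := by
      by_contra h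
      push_neg at h
      have : ∑ i, k i = 0 := Finset.sum_eq_zero (fun i _ => h i)
      omega
    obtain ⟨i, hi⟩ := hex
    set k' : Fin n → ℕ := k - Pi.single i 1 with hk'def
    have hk' : k' + Pi.single i 1 = k := by
      funext j
      by_cases hj : j = i
      · subst hj
        simp only [hk'def, Pi.add_apply, Pi.sub_apply, Pi.single_eq_same]
        omega
      · simp [hk'def, Pi.sub_apply, Pi.single_eq_of_ne hj]
    have hsum : ∑ j, k' j = N := by
      have h1 := congrArg (fun f : Fin n → ℕ => ∑ j, f j) hk'
      simp only [Pi.add_apply, Finset.sum_add_distrib] at h1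
      rw [Finset.sum_pi_single'] at h1
      simp at h1
      omega
    have heq : m + Pi.single i 1 + k' = m + k := by
      rw [add_assoc, add_comm _ k', hk']
    have h1 := ih k' (m + Pi.single i 1) hsum
    rw [heq] at h1
    have h2 := hub m i
    have h3 : v m ≤ v (m + k) := hmono k m
    have h5 : v m * K ≤ v (m + k) * K := mul_le_mul_of_nonneg_right h3 hK
    have hsum' : (∑ j, (k j : ℝ)) = (∑ j, (k' j : ℝ)) + 1 := by
      have hnat : (∑ j, k j) = (∑ j, k' j) + 1 := by omega
      exact_mod_cast hnat
    rw [hsum']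
    have hexp : ((∑ j, (k' j : ℝ)) + 1) * (v (m + k) * K)
        = (∑ j, (k' j : ℝ)) * (v (m + k) * K) + v (m + k) * K := by ring
    linarith [hexp.ge]


/-- δ-Lipschitz-type bound for the extension of a grid function. -/
theorem stmt8 (n : ℕ) (hn : 1 ≤ n) (p a : Fin n → ℝ)
    (hp : ∀ i, 0 < p i) (ha : ∀ i, 0 < a i)
    (c lam δ : ℝ) (hc : 0 < c) (hlam : 0 < lam) (hδ : 0 < δ)
    (v : (Fin n → ℕ) → ℝ) (hv0 : ∀ m, 0 ≤ v m)
    (hv1 : ∀ (m : Fin n → ℕ) (i : Fin n),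
      a i * p i * δ ≤ v (m + Pi.single i 1) - v m)
    (hv2 : ∀ m : Fin n → ℕ,
      v (m + 1) - v m ≤ v m * (Real.exp ((c + lam) * δ) - 1)) :
    ∀ x y : Fin n → ℝ, 0 ≤ x → 0 ≤ y →
      |Vext n p a δ v y - Vext n p a δ v x| ≤
        (∑ i, |proj n p δ y i - proj n p δ x i|) * (2 / ⨅ i, p i) *
          Vext n p a δ v (proj n p δ (x ⊔ y)) *
          ((Real.exp ((c + lam) * δ) - 1) / δ) +
        2 * δ * ∑ i, a i * p i := by
  intro x y hx hy
  haveI : Nonempty (Fin n) := ⟨⟨0, hn⟩⟩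
  set K : ℝ := Real.exp ((c + lam) * δ) - 1 with hKdef
  have hK : 0 ≤ K := by
    rw [hKdef]
    linarith [Real.one_le_exp (show (0:ℝ) ≤ (c + lam) * δ by positivity)]
  -- step inequality for v
  have hstep : ∀ m (i : Fin n), v m ≤ v (m + Pi.single i 1) := by
    intro m i
    have h1 := hv1 m i
    nlinarith [mul_pos (mul_pos (ha i) (hp i)) hδ]
  have hmono : ∀ (k m : Fin n → ℕ), v m ≤ v (m + k) :=
    fun k m => mono_aux v hstep _ k m rfl
  have hub : ∀ m (i : Fin n), v (m + Pi.single i 1) ≤ v m + v m * K := by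
    intro m i
    have heq : m + Pi.single i 1 + ((1 : Fin n → ℕ) - Pi.single i 1) = m + 1 := by
      funext j
      by_cases hj : j = i
      · subst hj; simp [Pi.sub_apply]
      · simp [Pi.sub_apply, Pi.single_eq_of_ne hj]
    have h1 := hmono ((1 : Fin n → ℕ) - Pi.single i 1) (m + Pi.single i 1)
    rw [heq] at h1
    have h2 := hv2 m
    linarith
  set m1 := rho n p δ x with hm1
  set m2 := rho n p δ y with hm2
  set M : Fin n → ℕ := fun i => max (m1 i) (m2 i) with hMdef
  have hMrho : rho n p δ (x ⊔ y) = M := by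
    funext i
    have hcpos : 0 < δ * p i := mul_pos hδ (hp i)
    have hmonof : Monotone (fun t : ℝ => ⌊t / (δ * p i)⌋₊) := by
      intro s t hst
      exact Nat.floor_mono (by gcongr)
    show ⌊(x ⊔ y) i / (δ * p i)⌋₊ = max (m1 i) (m2 i)
    rw [Pi.sup_apply]
    exact hmonof.map_max
  have hρg : ∀ q : Fin n → ℕ, rho n p δ (gdel n p δ q) = q := by
    intro q; funext i
    show ⌊p i * δ * (q i : ℝ) / (δ * p i)⌋₊ = q i
    have hq : p i * δ * (q i : ℝ) / (δ * p i) = (q i : ℝ) := by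
      rw [mul_comm δ (p i)]
      exact mul_div_cancel_left₀ _ (mul_pos (hp i) hδ).ne'
    rw [hq, Nat.floor_natCast]
  have hVproj : ∀ z : Fin n → ℝ, Vext n p a δ v (proj n p δ z) = v (rho n p δ z) := by
    intro z
    simp only [Vext, proj]
    rw [hρg]
    simp
  have hfrac : ∀ (z : Fin n → ℝ), 0 ≤ z → ∀ i,
      0 ≤ z i - proj n p δ z i ∧ z i - proj n p δ z i ≤ δ * p i := by
    intro z hz i
    have hcp : 0 < δ * p i := mul_pos hδ (hp i)
    have hzi : 0 ≤ z i := by simpa using hz i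
    have ht : 0 ≤ z i / (δ * p i) := div_nonneg hzi hcp.le
    have f1 : (⌊z i / (δ * p i)⌋₊ : ℝ) ≤ z i / (δ * p i) := Nat.floor_le ht
    have f2 : z i / (δ * p i) < ⌊z i / (δ * p i)⌋₊ + 1 := Nat.lt_floor_add_one _
    have key : (δ * p i) * (z i / (δ * p i)) = z i := by
      rw [mul_div_assoc']; exact mul_div_cancel_left₀ _ hcp.ne'
    have hproj : proj n p δ z i = p i * δ * (⌊z i / (δ * p i)⌋₊ : ℝ) := rfl
    rw [hproj]
    constructor
    · nlinarith [mul_le_mul_of_nonneg_left f1 hcp.le]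
    · nlinarith [mul_le_mul_of_nonneg_left f2.le hcp.le]
  -- abbreviations
  set S : ℝ := ∑ i, |(m2 i : ℝ) - (m1 i : ℝ)| with hSdef
  set L : ℝ := ∑ i, |proj n p δ y i - proj n p δ x i| with hLdef
  set P : ℝ := ⨅ i, p i with hPdef
  have hbdd : BddBelow (Set.range p) := Finite.bddBelow_range p
  have hPle : ∀ i, P ≤ p i := fun i => ciInf_le hbdd i
  have hP : 0 < P := by
    obtain ⟨i0, hi0⟩ := Finite.exists_min p
    calc (0:ℝ) < p i0 := hp i0
      _ ≤ P := le_ciInf hi0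
  have hm1M : m1 + (M - m1) = M := by
    funext j
    simp only [Pi.add_apply, Pi.sub_apply, hMdef]
    omega
  have hm2M : m2 + (M - m2) = M := by
    funext j
    simp only [Pi.add_apply, Pi.sub_apply, hMdef]
    omega
  have hXnn : 0 ≤ v M * K := mul_nonneg (hv0 M) hK
  have hch1 := chain_aux v K hK hmono hub _ (M - m1) m1 rfl
  rw [hm1M] at hch1
  have hch2 := chain_aux v K hK hmono hub _ (M - m2) m2 rfl
  rw [hm2M] at hch2
  have hv1M : v m1 ≤ v M := by have h := hmono (M - m1) m1; rwa [hm1M] at h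
  have hv2M : v m2 ≤ v M := by have h := hmono (M - m2) m2; rwa [hm2M] at h
  have hcast1 : (∑ i, (((M - m1) i : ℕ) : ℝ)) ≤ S := by
    rw [hSdef]
    apply Finset.sum_le_sum
    intro i _
    simp only [Pi.sub_apply, hMdef]
    rcases le_total (m1 i) (m2 i) with h | h
    · rw [max_eq_right h, Nat.cast_sub h,
        abs_of_nonneg (sub_nonneg.mpr (Nat.cast_le.mpr h))]
    · rw [max_eq_left h, Nat.sub_self]
      simpa using abs_nonneg ((m2 i : ℝ) - (m1 i : ℝ))
  have hcast2 : (∑ i, (((M - m2) i : ℕ) : ℝ)) ≤ S := by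
    rw [hSdef]
    apply Finset.sum_le_sum
    intro i _
    simp only [Pi.sub_apply, hMdef]
    rcases le_total (m2 i) (m1 i) with h | h
    · rw [max_eq_left h, Nat.cast_sub h, abs_sub_comm,
        abs_of_nonneg (sub_nonneg.mpr (Nat.cast_le.mpr h))]
    · rw [max_eq_right h, Nat.sub_self]
      simpa using abs_nonneg ((m2 i : ℝ) - (m1 i : ℝ))
  have habs : |v m2 - v m1| ≤ S * (v M * K) := by
    have hS1 : (∑ i, (((M - m1) i : ℕ) : ℝ)) * (v M * K) ≤ S * (v M * K) :=
      mul_le_mul_of_nonneg_right hcast1 hXnn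
    have hS2 : (∑ i, (((M - m2) i : ℕ) : ℝ)) * (v M * K) ≤ S * (v M * K) :=
      mul_le_mul_of_nonneg_right hcast2 hXnn
    rw [abs_le]
    constructor <;> linarith
  have hprojdiff : ∀ i, proj n p δ y i - proj n p δ x i
      = p i * δ * ((m2 i : ℝ) - (m1 i : ℝ)) := by
    intro i
    show p i * δ * (m2 i : ℝ) - p i * δ * (m1 i : ℝ) = _
    ring
  have hLS : P * δ * S ≤ L := by
    rw [hLdef, hSdef, Finset.mul_sum]
    apply Finset.sum_le_sum
    intro i _
    rw [hprojdiff i, abs_mul, abs_of_pos (mul_pos (hp i) hδ)]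
    exact mul_le_mul_of_nonneg_right
      (mul_le_mul_of_nonneg_right (hPle i) hδ.le)
      (abs_nonneg ((m2 i : ℝ) - (m1 i : ℝ)))
  have hdecomp : Vext n p a δ v y - Vext n p a δ v x
      = (v m2 - v m1)
        + ∑ i, (a i * (y i - proj n p δ y i) - a i * (x i - proj n p δ x i)) := by
    simp only [Vext, ← hm1, ← hm2]
    rw [Finset.sum_sub_distrib]
    ring
  have hA : |∑ i, (a i * (y i - proj n p δ y i) - a i * (x i - proj n p δ x i))|
      ≤ δ * ∑ i, a i * p i := by
    calc |∑ i, (a i * (y i - proj n p δ y i) - a i * (x i - proj n p δ x i))|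
        ≤ ∑ i, |a i * (y i - proj n p δ y i) - a i * (x i - proj n p δ x i)| :=
          Finset.abs_sum_le_sum_abs _ _
      _ ≤ ∑ i, a i * (δ * p i) := by
          apply Finset.sum_le_sum
          intro i _
          obtain ⟨hy1, hy2⟩ := hfrac y hy i
          obtain ⟨hx1, hx2⟩ := hfrac x hx i
          rw [← mul_sub, abs_mul, abs_of_pos (ha i)]
          apply mul_le_mul_of_nonneg_left _ (ha i).le
          rw [abs_le]
          constructor <;> linarith
      _ = δ * ∑ i, a i * p i := by
          rw [Finset.mul_sum]
          exact Finset.sum_congr rfl fun i _ => by ring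
  have hVM : Vext n p a δ v (proj n p δ (x ⊔ y)) = v M := by rw [hVproj, hMrho]
  have hsum_ap : 0 ≤ ∑ i, a i * p i :=
    Finset.sum_nonneg fun i _ => (mul_pos (ha i) (hp i)).le
  have hLnn : 0 ≤ L := by
    rw [hLdef]; exact Finset.sum_nonneg fun i _ => abs_nonneg _
  have hmain : S * (v M * K) ≤ L * (2 / P) * v M * (K / δ) := by
    have h1 : S * (v M * K) ≤ (L / (P * δ)) * (v M * K) := by
      apply mul_le_mul_of_nonneg_right _ hXnn
      rw [le_div_iff₀ (mul_pos hP hδ)]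
      nlinarith [hLS]
    have e1 : L * (2 / P) * v M * (K / δ) - (L / (P * δ)) * (v M * K)
        = (L * v M * K) / (P * δ) := by
      field_simp
      ring
    have e2 : 0 ≤ (L * v M * K) / (P * δ) :=
      div_nonneg (mul_nonneg (mul_nonneg hLnn (hv0 M)) hK) (mul_pos hP hδ).le
    linarith
  rw [hVM]
  calc |Vext n p a δ v y - Vext n p a δ v x|
      = |(v m2 - v m1)
        + ∑ i, (a i * (y i - proj n p δ y i) - a i * (x i - proj n p δ x i))| := by
        rw [hdecomp]
    _ ≤ |v m2 - v m1|
        + |∑ i, (a i * (y i - proj n p δ y i) - a i * (x i - proj n p δ x i))| :=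
        abs_add_le _ _
    _ ≤ S * (v M * K) + δ * ∑ i, a i * p i := add_le_add habs hA
    _ ≤ L * (2 / P) * v M * (K / δ) + 2 * δ * ∑ i, a i * p i := by
        have : δ * ∑ i, a i * p i ≤ 2 * δ * ∑ i, a i * p i := by nlinarith
        linarith


end
end

section
/- Let δ > 0 and δ_k = δ/2^k for k ≥ 0. For each k let v_k : ℕ_0^n → [0,∞) satisfy v_k(m+e_i) − v_k(m) ≥ a_i p_i δ_k for every i and v_k(m+1) − v_k(m) ≤ v_k(m)(e^{(c+λ)δ_k} − 1) for every m, and let V_k(x) := v_k(ρ^{δ_k}(x)) + a·(x − ⟨x⟩^{δ_k}). Assume V_k ≤ V_{k+1} pointwise on ℝ_+^n and that V̄(x) := lim_{k→∞} V_k(x) is finite for every x. Then for all x, y ∈ ℝ_+^n with y ≥ x (componentwise): a·(y − x) ≤ V̄(y) − V̄(x) ≤ V̄(y) · (2(c+λ)/p̂) · ‖y − x‖_1, where p̂ = min_i p_i. In particular V̄ is nondecreasing and locally Lipschitz on ℝ_+^n. -/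
open MeasureTheory Filter

noncomputable section

lemma gridA {n : ℕ} (w : (Fin n → ℕ) → ℝ) (b : Fin n → ℝ)
    (h : ∀ m i, b i ≤ w (m + Pi.single i 1) - w m) :
    ∀ (N : ℕ) (d m : Fin n → ℕ), ∑ i, d i = N →
      ∑ i, b i * (d i : ℝ) ≤ w (m + d) - w m := by
  intro N
  induction N with
  | zero =>
    intro d m hd
    have hd0 : d = 0 := by
      funext i
      exact Finset.sum_eq_zero_iff.mp hd i (Finset.mem_univ i)
    subst hd0
    simp
  | succ N ih =>
    intro d m hd
    have hex : ∃ i, d i ≠ 0 := by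
      by_contra h'
      push_neg at h'
      simp [h'] at hd
    obtain ⟨i0, hi0⟩ := hex
    set d' : Fin n → ℕ := d - Pi.single i0 1 with hd'
    have hdd : d = d' + Pi.single i0 1 := by
      funext j
      by_cases hj : j = i0
      · subst hj
        simp only [hd', Pi.add_apply, Pi.sub_apply, Pi.single_eq_same]
        omega
      · simp [hd', Pi.single_eq_of_ne hj]
    have hsum' : ∑ i, d' i = N := by
      have : ∑ i, d i = ∑ i, d' i + ∑ i, (Pi.single i0 1 : Fin n → ℕ) i := by
        rw [← Finset.sum_add_distrib]
        exact Finset.sum_congr rfl fun j _ => by rw [hdd]; rfl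
      have hs1 : ∑ i, (Pi.single i0 1 : Fin n → ℕ) i = 1 := by
        rw [Finset.sum_eq_single i0]
        · simp
        · intro j _ hj; simp [Pi.single_eq_of_ne hj]
        · intro hj; exact absurd (Finset.mem_univ i0) hj
      omega
    have h1 := ih d' m hsum'
    have h2 := h (m + d') i0
    have heq : m + d = (m + d') + Pi.single i0 1 := by rw [hdd, add_assoc]
    have hsplit : ∑ i, b i * (d i : ℝ) = (∑ i, b i * (d' i : ℝ)) + b i0 := by
      have : ∀ i, b i * (d i : ℝ) = b i * (d' i : ℝ) + b i * ((Pi.single i0 1 : Fin n → ℕ) i : ℝ) := by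
        intro i; rw [hdd]; push_cast [Pi.add_apply]; ring
      rw [Finset.sum_congr rfl fun i _ => this i, Finset.sum_add_distrib]
      congr 1
      rw [Finset.sum_eq_single i0]
      · simp
      · intro j _ hj; simp [Pi.single_eq_of_ne hj]
      · intro hj; exact absurd (Finset.mem_univ i0) hj
    rw [heq, hsplit]
    linarith

lemma gridB {n : ℕ} (w : (Fin n → ℕ) → ℝ) (E : ℝ) (hE : 0 ≤ E)
    (h : ∀ m i, w (m + Pi.single i 1) ≤ w m * E) :
    ∀ (N : ℕ) (d m : Fin n → ℕ), ∑ i, d i = N → w (m + d) ≤ w m * E ^ N := by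
  intro N
  induction N with
  | zero =>
    intro d m hd
    have hd0 : d = 0 := by
      funext i
      exact Finset.sum_eq_zero_iff.mp hd i (Finset.mem_univ i)
    subst hd0
    simp
  | succ N ih =>
    intro d m hd
    have hex : ∃ i, d i ≠ 0 := by
      by_contra h'
      push_neg at h'
      simp [h'] at hd
    obtain ⟨i0, hi0⟩ := hex
    set d' : Fin n → ℕ := d - Pi.single i0 1 with hd'
    have hdd : d = d' + Pi.single i0 1 := by
      funext j
      by_cases hj : j = i0
      · subst hj
        simp only [hd', Pi.add_apply, Pi.sub_apply, Pi.single_eq_same]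
        omega
      · simp [hd', Pi.single_eq_of_ne hj]
    have hsum' : ∑ i, d' i = N := by
      have : ∑ i, d i = ∑ i, d' i + ∑ i, (Pi.single i0 1 : Fin n → ℕ) i := by
        rw [← Finset.sum_add_distrib]
        exact Finset.sum_congr rfl fun j _ => by rw [hdd]; rfl
      have hs1 : ∑ i, (Pi.single i0 1 : Fin n → ℕ) i = 1 := by
        rw [Finset.sum_eq_single i0]
        · simp
        · intro j _ hj; simp [Pi.single_eq_of_ne hj]
        · intro hj; exact absurd (Finset.mem_univ i0) hj
      omega
    have heq : m + d = (m + d') + Pi.single i0 1 := by rw [hdd, add_assoc]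
    rw [heq]
    calc w ((m + d') + Pi.single i0 1) ≤ w (m + d') * E := h (m + d') i0
      _ ≤ (w m * E ^ N) * E := mul_le_mul_of_nonneg_right (ih d' m hsum') hE
      _ = w m * E ^ (N + 1) := by ring

lemma proj_bounds {n : ℕ} (p : Fin n → ℝ) (hp : ∀ i, 0 < p i) (δ' : ℝ) (hδ' : 0 < δ')
    (x : Fin n → ℝ) (hx : 0 ≤ x) (i : Fin n) :
    proj n p δ' x i ≤ x i ∧ x i ≤ proj n p δ' x i + p i * δ' := by
  have hxi : 0 ≤ x i := hx i
  have hpi := hp i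
  simp only [proj, gdel, rho]
  set q := x i / (δ' * p i) with hq
  have hq0 : 0 ≤ q := div_nonneg hxi (by positivity)
  have hx_eq : x i = p i * δ' * q := by
    rw [hq]; field_simp
  constructor
  · rw [hx_eq]
    exact mul_le_mul_of_nonneg_left (Nat.floor_le hq0) (by positivity)
  · have h1 : q ≤ (⌊q⌋₊ : ℝ) + 1 := (Nat.lt_floor_add_one q).le
    have h2 : p i * δ' * q ≤ p i * δ' * ((⌊q⌋₊ : ℝ) + 1) :=
      mul_le_mul_of_nonneg_left h1 (by positivity)
    rw [hx_eq]
    nlinarith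

lemma rho_mono {n : ℕ} (p : Fin n → ℝ) (hp : ∀ i, 0 < p i) (δ' : ℝ) (hδ' : 0 < δ')
    (x y : Fin n → ℝ) (hxy : x ≤ y) (i : Fin n) : rho n p δ' x i ≤ rho n p δ' y i := by
  apply Nat.floor_le_floor
  have hpi := hp i
  exact (div_le_div_iff_of_pos_right (by positivity)).mpr (hxy i)

lemma rho_diff {n : ℕ} (p : Fin n → ℝ) (hp : ∀ i, 0 < p i) (δ' : ℝ) (hδ' : 0 < δ')
    (x y : Fin n → ℝ) (hx : 0 ≤ x) (hxy : x ≤ y) (i : Fin n) :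
    δ' * ((rho n p δ' y i : ℝ) - (rho n p δ' x i : ℝ)) ≤ (y i - x i) / p i + δ' := by
  have hpi := hp i
  have hxi : 0 ≤ x i := hx i
  have hyi : 0 ≤ y i := le_trans hxi (hxy i)
  simp only [rho]
  set qx := x i / (δ' * p i) with hqx
  set qy := y i / (δ' * p i) with hqy
  have h1 : (⌊qy⌋₊ : ℝ) ≤ qy := Nat.floor_le (by positivity)
  have h2 : qx ≤ (⌊qx⌋₊ : ℝ) + 1 := (Nat.lt_floor_add_one qx).le
  have hqd : qy - qx = (y i - x i) / (δ' * p i) := by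
    rw [hqx, hqy]; field_simp
  have hkey : (⌊qy⌋₊ : ℝ) - (⌊qx⌋₊ : ℝ) ≤ (y i - x i) / (δ' * p i) + 1 := by
    rw [← hqd]; linarith
  have hmul := mul_le_mul_of_nonneg_left hkey (le_of_lt hδ')
  calc δ' * ((⌊qy⌋₊ : ℝ) - (⌊qx⌋₊ : ℝ)) ≤ δ' * ((y i - x i) / (δ' * p i) + 1) := hmul
    _ = (y i - x i) / p i + δ' := by field_simp

lemma perk_bounds {n : ℕ} (p a : Fin n → ℝ) (hp : ∀ i, 0 < p i) (ha : ∀ i, 0 < a i)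
    (t δ' : ℝ) (ht : 0 < t) (hδ' : 0 < δ')
    (w : (Fin n → ℕ) → ℝ) (hw0 : ∀ m, 0 ≤ w m)
    (h1 : ∀ (m : Fin n → ℕ) (i : Fin n), a i * p i * δ' ≤ w (m + Pi.single i 1) - w m)
    (h2 : ∀ m : Fin n → ℕ, w (m + 1) - w m ≤ w m * (Real.exp (t * δ') - 1))
    (x y : Fin n → ℝ) (hx : 0 ≤ x) (hxy : x ≤ y) :
    (∑ i, a i * (y i - x i)) ≤ Vext n p a δ' w y - Vext n p a δ' w x ∧
    Vext n p a δ' w y - Vext n p a δ' w x ≤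
      Vext n p a δ' w y * (t * ((∑ i, (y i - x i) / p i) + n * δ')) + (∑ i, a i * p i) * δ' := by
  have hy : 0 ≤ y := le_trans hx hxy
  set mx := rho n p δ' x with hmx
  set my := rho n p δ' y with hmy
  have hm : ∀ i, mx i ≤ my i := fun i => rho_mono p hp δ' hδ' x y hxy i
  set d : Fin n → ℕ := my - mx with hdby
  have hmd : mx + d = my := by
    funext i
    simp only [Pi.add_apply, Pi.sub_apply, hdby]
    have := hm i
    omega
  have hcast : ∀ i, (d i : ℝ) = (my i : ℝ) - (mx i : ℝ) := by
    intro i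
    simp only [hdby, Pi.sub_apply]
    rw [Nat.cast_sub (hm i)]
  -- abbreviations for the affine parts
  have hAx : ∀ (z : Fin n → ℝ), 0 ≤ z → 0 ≤ ∑ i, a i * (z i - proj n p δ' z i) := by
    intro z hz
    apply Finset.sum_nonneg
    intro i _
    have := (proj_bounds p hp δ' hδ' z hz i).1
    have := (ha i).le
    nlinarith
  have hAy_le : ∑ i, a i * (y i - proj n p δ' y i) ≤ (∑ i, a i * p i) * δ' := by
    rw [Finset.sum_mul]
    apply Finset.sum_le_sum
    intro i _
    have h := (proj_bounds p hp δ' hδ' y hy i).2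
    have := (ha i).le
    nlinarith
  -- lower bound
  have hlow : ∑ i, a i * (proj n p δ' y i - proj n p δ' x i) ≤ w my - w mx := by
    have hA := gridA w (fun i => a i * p i * δ') h1 (∑ i, d i) d mx rfl
    rw [hmd] at hA
    refine le_trans (le_of_eq ?_) hA
    apply Finset.sum_congr rfl
    intro i _
    simp only [proj, gdel, hcast i]
    rw [← hmx, ← hmy]
    ring
  have hVdiff : Vext n p a δ' w y - Vext n p a δ' w x
      = (w my - w mx) + (∑ i, a i * (y i - proj n p δ' y i))
        - (∑ i, a i * (x i - proj n p δ' x i)) := by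
    simp only [Vext, ← hmx, ← hmy]
    ring
  constructor
  · have heq : (∑ i, a i * (proj n p δ' y i - proj n p δ' x i))
        + (∑ i, a i * (y i - proj n p δ' y i)) - (∑ i, a i * (x i - proj n p δ' x i))
        = ∑ i, a i * (y i - x i) := by
      rw [← Finset.sum_add_distrib, ← Finset.sum_sub_distrib]
      apply Finset.sum_congr rfl
      intro i _
      ring
    rw [hVdiff]
    linarith
  · -- upper bound
    set N := ∑ i, d i with hN
    have hstep : ∀ (m : Fin n → ℕ) (i : Fin n), w (m + Pi.single i 1) ≤ w m * Real.exp (t * δ') := by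
      intro m i
      have hw1 : w (m + Pi.single i 1) ≤ w (m + 1) := by
        have heq : (m + Pi.single i 1) + (1 - Pi.single i 1) = m + 1 := by
          funext j
          by_cases hj : j = i
          · subst hj; simp [Pi.single_eq_same]
          · simp [Pi.single_eq_of_ne hj]
        have hA := gridA w (fun j => a j * p j * δ') h1
          (∑ j, (1 - Pi.single i 1 : Fin n → ℕ) j) (1 - Pi.single i 1) (m + Pi.single i 1) rfl
        rw [heq] at hA
        have hnn : (0:ℝ) ≤ ∑ j, (a j * p j * δ') * (((1 - Pi.single i 1 : Fin n → ℕ) j : ℕ) : ℝ) := by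
          apply Finset.sum_nonneg
          intro j _
          have := (ha j).le
          have := (hp j).le
          positivity
        linarith
      have h2' := h2 m
      have hw := hw0 m
      calc w (m + Pi.single i 1) ≤ w (m + 1) := hw1
        _ ≤ w m * Real.exp (t * δ') := by nlinarith
    have hB := gridB w (Real.exp (t * δ')) (Real.exp_nonneg _) hstep N d mx rfl
    rw [hmd] at hB
    set s : ℝ := t * δ' * N with hs
    have hs0 : 0 ≤ s := by positivity
    have hEN : Real.exp (t * δ') ^ N = Real.exp s := by
      rw [hs, mul_comm (t * δ') (N:ℝ), Real.exp_nat_mul]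
    rw [hEN] at hB
    -- w my - w mx ≤ w my * s
    have hkey : w my - w mx ≤ w my * s := by
      have hexp : w my * Real.exp (-s) ≤ w mx := by
        have := mul_le_mul_of_nonneg_right hB (Real.exp_nonneg (-s))
        rw [mul_assoc, ← Real.exp_add] at this
        simpa using this
      have h1e : 1 - Real.exp (-s) ≤ s := by
        have := Real.add_one_le_exp (-s)
        linarith
      have hwy := hw0 my
      nlinarith [Real.exp_nonneg (-s)]
    -- δ' * N ≤ S + n δ'
    have hNle : δ' * (N : ℝ) ≤ (∑ i, (y i - x i) / p i) + n * δ' := by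
      have : δ' * (N : ℝ) = ∑ i, δ' * ((my i : ℝ) - (mx i : ℝ)) := by
        rw [hN, Nat.cast_sum, Finset.mul_sum]
        exact Finset.sum_congr rfl fun i _ => by rw [hcast i]
      rw [this]
      have hb : ∀ i ∈ Finset.univ, δ' * ((my i : ℝ) - (mx i : ℝ)) ≤ (y i - x i) / p i + δ' :=
        fun i _ => rho_diff p hp δ' hδ' x y hx hxy i
      calc ∑ i, δ' * ((my i : ℝ) - (mx i : ℝ)) ≤ ∑ i : Fin n, ((y i - x i) / p i + δ') :=
            Finset.sum_le_sum hb
        _ = (∑ i, (y i - x i) / p i) + n * δ' := by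
            rw [Finset.sum_add_distrib]
            simp [Finset.sum_const, mul_comm]
    have hs_le : s ≤ t * ((∑ i, (y i - x i) / p i) + n * δ') := by
      rw [hs, mul_assoc]
      exact mul_le_mul_of_nonneg_left hNle ht.le
    -- assemble
    have hwy_le : w my ≤ Vext n p a δ' w y := by
      have := hAx y hy
      simp only [Vext, ← hmy]
      linarith
    have hV0 : 0 ≤ Vext n p a δ' w y := le_trans (hw0 my) hwy_le
    have hAx0 := hAx x hx
    have hchain : w my - w mx ≤ Vext n p a δ' w y * (t * ((∑ i, (y i - x i) / p i) + n * δ')) := by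
      calc w my - w mx ≤ w my * s := hkey
        _ ≤ Vext n p a δ' w y * s := mul_le_mul_of_nonneg_right hwy_le hs0
        _ ≤ Vext n p a δ' w y * (t * ((∑ i, (y i - x i) / p i) + n * δ')) :=
            mul_le_mul_of_nonneg_left hs_le hV0
    rw [hVdiff]
    linarith

/-- the limit `V̄` of the embedded-grid extensions is nondecreasing and
locally Lipschitz, with the two-sided increment bound. -/
theorem stmt9 (n : ℕ) (hn : 1 ≤ n) (p a : Fin n → ℝ)
    (hp : ∀ i, 0 < p i) (ha : ∀ i, 0 < a i)
    (c lam δ : ℝ) (hc : 0 < c) (hlam : 0 < lam) (hδ : 0 < δ)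
    (v : ℕ → (Fin n → ℕ) → ℝ) (hv0 : ∀ k m, 0 ≤ v k m)
    (hv1 : ∀ (k : ℕ) (m : Fin n → ℕ) (i : Fin n),
      a i * p i * (δ / 2 ^ k) ≤ v k (m + Pi.single i 1) - v k m)
    (hv2 : ∀ (k : ℕ) (m : Fin n → ℕ),
      v k (m + 1) - v k m ≤ v k m * (Real.exp ((c + lam) * (δ / 2 ^ k)) - 1))
    (hmono : ∀ x : Fin n → ℝ, 0 ≤ x → ∀ k,
      Vext n p a (δ / 2 ^ k) (v k) x ≤ Vext n p a (δ / 2 ^ (k + 1)) (v (k + 1)) x)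
    (Vbar : (Fin n → ℝ) → ℝ)
    (hlim : ∀ x : Fin n → ℝ, 0 ≤ x →
      Tendsto (fun k => Vext n p a (δ / 2 ^ k) (v k) x) atTop (nhds (Vbar x))) :
    (∀ x y : Fin n → ℝ, 0 ≤ x → x ≤ y →
      (∑ i, a i * (y i - x i)) ≤ Vbar y - Vbar x ∧
      Vbar y - Vbar x ≤ Vbar y * (2 * (c + lam) / ⨅ i, p i) * ∑ i, |y i - x i|) ∧
    MonotoneOn Vbar {x : Fin n → ℝ | 0 ≤ x} ∧
    (∀ x : Fin n → ℝ, 0 ≤ x → ∃ ε > (0:ℝ), ∃ K : NNReal,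
      LipschitzOnWith K Vbar ({y : Fin n → ℝ | 0 ≤ y} ∩ Metric.ball x ε)) := by
  classical
  have hne : Nonempty (Fin n) := ⟨⟨0, hn⟩⟩
  have ht : 0 < c + lam := by linarith
  set phat := ⨅ i, p i with hphatdef
  have hphat_pos : 0 < phat := by
    obtain ⟨i, hi⟩ := exists_eq_ciInf_of_finite (f := p)
    rw [hphatdef, ← hi]; exact hp i
  have hphat_le : ∀ i, phat ≤ p i := fun i =>
    ciInf_le (Set.Finite.bddBelow (Set.finite_range p)) i
  have hδk : ∀ k : ℕ, 0 < δ / 2 ^ k := fun k => by positivity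
  have hVnn : ∀ (k : ℕ) (x : Fin n → ℝ), 0 ≤ x → 0 ≤ Vext n p a (δ / 2 ^ k) (v k) x := by
    intro k x hx
    have h1 := hv0 k (rho n p (δ / 2 ^ k) x)
    have h2 : 0 ≤ ∑ i, a i * (x i - proj n p (δ / 2 ^ k) x i) := by
      apply Finset.sum_nonneg
      intro i _
      have := (proj_bounds p hp _ (hδk k) x hx i).1
      nlinarith [(ha i).le]
    simp only [Vext]
    linarith
  have hVle : ∀ x : Fin n → ℝ, 0 ≤ x → ∀ k, Vext n p a (δ / 2 ^ k) (v k) x ≤ Vbar x := by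
    intro x hx
    exact (monotone_nat_of_le_succ (fun j => hmono x hx j)).ge_of_tendsto (hlim x hx)
  have hVbar0 : ∀ x : Fin n → ℝ, 0 ≤ x → 0 ≤ Vbar x := fun x hx =>
    ge_of_tendsto' (hlim x hx) (fun k => hVnn k x hx)
  -- key two-sided estimate
  have key : ∀ x y : Fin n → ℝ, 0 ≤ x → x ≤ y →
      (∑ i, a i * (y i - x i)) ≤ Vbar y - Vbar x ∧
      Vbar y - Vbar x ≤ Vbar y * ((c + lam) * ∑ i, (y i - x i) / p i) := by
    intro x y hx hxy
    have hy : 0 ≤ y := le_trans hx hxy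
    have hper := fun k : ℕ => perk_bounds p a hp ha (c + lam) (δ / 2 ^ k) ht (hδk k)
      (v k) (hv0 k) (hv1 k) (hv2 k) x y hx hxy
    have hT : Tendsto (fun k => Vext n p a (δ / 2 ^ k) (v k) y - Vext n p a (δ / 2 ^ k) (v k) x)
        atTop (nhds (Vbar y - Vbar x)) := (hlim y hy).sub (hlim x hx)
    have hS0 : 0 ≤ ∑ i, (y i - x i) / p i := by
      apply Finset.sum_nonneg
      intro i _
      exact div_nonneg (by have := hxy i; linarith) (hp i).le
    constructor
    · exact ge_of_tendsto' hT fun k => (hper k).1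
    · have hδ0 : Tendsto (fun k : ℕ => δ / 2 ^ k) atTop (nhds 0) := by
        have h2 : (fun k : ℕ => δ / 2 ^ k) = fun k : ℕ => δ * (1 / 2 : ℝ) ^ k := by
          funext k
          rw [one_div, inv_pow, div_eq_mul_inv]
        rw [h2]
        have h3 : Tendsto (fun k : ℕ => (1 / 2 : ℝ) ^ k) atTop (nhds 0) := by
          apply tendsto_pow_atTop_nhds_zero_of_lt_one <;> norm_num
        simpa using h3.const_mul δ
      have hup : ∀ k : ℕ, Vext n p a (δ / 2 ^ k) (v k) y - Vext n p a (δ / 2 ^ k) (v k) x ≤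
          Vbar y * ((c + lam) * ((∑ i, (y i - x i) / p i) + n * (δ / 2 ^ k)))
            + (∑ i, a i * p i) * (δ / 2 ^ k) := by
        intro k
        refine le_trans (hper k).2 ?_
        have hfac : 0 ≤ (c + lam) * ((∑ i, (y i - x i) / p i) + n * (δ / 2 ^ k)) := by
          apply mul_nonneg ht.le
          have : (0:ℝ) ≤ n * (δ / 2 ^ k) := by positivity
          linarith
        have := mul_le_mul_of_nonneg_right (hVle y hy k) hfac
        linarith
      have hRT : Tendsto (fun k : ℕ =>
          Vbar y * ((c + lam) * ((∑ i, (y i - x i) / p i) + n * (δ / 2 ^ k)))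
            + (∑ i, a i * p i) * (δ / 2 ^ k)) atTop
          (nhds (Vbar y * ((c + lam) * ((∑ i, (y i - x i) / p i) + n * 0))
            + (∑ i, a i * p i) * 0)) := by
        apply Tendsto.add
        · exact (((tendsto_const_nhds.add (hδ0.const_mul (n:ℝ))).const_mul (c + lam)).const_mul
            (Vbar y))
        · exact hδ0.const_mul _
      have hfin := le_of_tendsto_of_tendsto' hT hRT hup
      simpa using hfin
  -- polished upper bound
  have key2 : ∀ x y : Fin n → ℝ, 0 ≤ x → x ≤ y →
      Vbar y - Vbar x ≤ Vbar y * (2 * (c + lam) / phat) * ∑ i, |y i - x i| := by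
    intro x y hx hxy
    have hy : 0 ≤ y := le_trans hx hxy
    have h2 := (key x y hx hxy).2
    set T := ∑ i, |y i - x i| with hTdef
    have hT0 : 0 ≤ T := Finset.sum_nonneg fun i _ => abs_nonneg _
    have hS : (∑ i, (y i - x i) / p i) ≤ T / phat := by
      rw [hTdef, Finset.sum_div]
      apply Finset.sum_le_sum
      intro i _
      have hxyi : 0 ≤ y i - x i := by have := hxy i; linarith
      rw [abs_of_nonneg hxyi]
      exact div_le_div_of_nonneg_left hxyi hphat_pos (hphat_le i)
    have hfin : (c + lam) * ∑ i, (y i - x i) / p i ≤ (2 * (c + lam) / phat) * T := by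
      have h3 : (c + lam) * ∑ i, (y i - x i) / p i ≤ (c + lam) * (T / phat) :=
        mul_le_mul_of_nonneg_left hS ht.le
      have h4 : (c + lam) * (T / phat) ≤ (2 * (c + lam) / phat) * T := by
        rw [div_mul_eq_mul_div, mul_div_assoc]
        nlinarith [div_nonneg hT0 hphat_pos.le]
      linarith
    calc Vbar y - Vbar x ≤ Vbar y * ((c + lam) * ∑ i, (y i - x i) / p i) := h2
      _ ≤ Vbar y * ((2 * (c + lam) / phat) * T) :=
          mul_le_mul_of_nonneg_left hfin (hVbar0 y hy)
      _ = Vbar y * (2 * (c + lam) / phat) * T := by ring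
  refine ⟨fun x y hx hxy => ⟨(key x y hx hxy).1, key2 x y hx hxy⟩, ?_, ?_⟩
  · -- monotone
    intro x hx y hy hxy
    have h1 := (key x y hx hxy).1
    have h0 : 0 ≤ ∑ i, a i * (y i - x i) := by
      apply Finset.sum_nonneg
      intro i _
      have := hxy i
      nlinarith [(ha i).le]
    simp only [Set.mem_setOf_eq] at *
    linarith
  · -- locally Lipschitz
    intro x hx
    set z1 : Fin n → ℝ := fun i => x i + 1 with hz1
    have hz1nn : 0 ≤ z1 := by
      intro i
      have := hx i
      simp only [hz1]
      linarith
    set M := Vbar z1 with hM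
    have hM0 : 0 ≤ M := hVbar0 z1 hz1nn
    set C := 2 * (c + lam) / phat with hCdef
    have hC0 : 0 ≤ C := by positivity
    refine ⟨1, one_pos, Real.toNNReal (M * C * n), ?_⟩
    rw [lipschitzOnWith_iff_dist_le_mul]
    have main : ∀ u w : Fin n → ℝ, 0 ≤ u → 0 ≤ w →
        u ∈ Metric.ball x 1 → w ∈ Metric.ball x 1 →
        Vbar u - Vbar w ≤ M * C * n * dist u w := by
      intro u w hu0 hw0 hub hwb
      set z : Fin n → ℝ := fun i => max (u i) (w i) with hz
      have hz0 : 0 ≤ z := fun i => le_trans (hu0 i) (le_max_left _ _)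
      have huz : u ≤ z := fun i => le_max_left _ _
      have hwz : w ≤ z := fun i => le_max_right _ _
      have hzz1 : z ≤ z1 := by
        intro i
        have hui : |u i - x i| < 1 := by
          have h := dist_le_pi_dist u x i
          rw [Real.dist_eq] at h
          exact lt_of_le_of_lt h (Metric.mem_ball.mp hub)
        have hwi : |w i - x i| < 1 := by
          have h := dist_le_pi_dist w x i
          rw [Real.dist_eq] at h
          exact lt_of_le_of_lt h (Metric.mem_ball.mp hwb)
        rw [abs_lt] at hui hwi
        simp only [hz, hz1, max_le_iff]
        constructor <;> linarith [hui.2, hwi.2]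
      have hVuz : Vbar u ≤ Vbar z := by
        have h1 := (key u z hu0 huz).1
        have h0 : 0 ≤ ∑ i, a i * (z i - u i) := by
          apply Finset.sum_nonneg
          intro i _
          have := huz i
          nlinarith [(ha i).le]
        linarith
      have hVz1 : Vbar z ≤ M := by
        have h1 := (key z z1 hz0 hzz1).1
        have h0 : 0 ≤ ∑ i, a i * (z1 i - z i) := by
          apply Finset.sum_nonneg
          intro i _
          have := hzz1 i
          nlinarith [(ha i).le]
        rw [hM]
        linarith
      have hup := key2 w z hw0 hwz
      have hTb : (∑ i, |z i - w i|) ≤ n * dist u w := by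
        have hb : ∀ i ∈ Finset.univ, |z i - w i| ≤ dist u w := by
          intro i _
          have h1 : |z i - w i| = z i - w i := abs_of_nonneg (by have := hwz i; linarith)
          have h2 : z i - w i ≤ |u i - w i| := by
            rcases le_total (u i) (w i) with h | h
            · simp only [hz]
              rw [max_eq_right h]
              simp [abs_nonneg]
            · simp only [hz]
              rw [max_eq_left h]
              exact le_abs_self _
          have h3 : |u i - w i| ≤ dist u w := by
            have h := dist_le_pi_dist u w i
            rwa [Real.dist_eq] at h
          linarith
        calc (∑ i, |z i - w i|) ≤ ∑ _i : Fin n, dist u w := Finset.sum_le_sum hb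
          _ = n * dist u w := by simp [Finset.sum_const, mul_comm]
      have hchain : Vbar z - Vbar w ≤ M * C * (n * dist u w) := by
        have hT0 : 0 ≤ ∑ i, |z i - w i| := Finset.sum_nonneg fun i _ => abs_nonneg _
        have h5 : Vbar z * C * (∑ i, |z i - w i|) ≤ M * C * (∑ i, |z i - w i|) := by
          apply mul_le_mul_of_nonneg_right _ hT0
          exact mul_le_mul_of_nonneg_right hVz1 hC0
        have h6 : M * C * (∑ i, |z i - w i|) ≤ M * C * (n * dist u w) :=
          mul_le_mul_of_nonneg_left hTb (by positivity)
        rw [hCdef] at *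
        linarith
      calc Vbar u - Vbar w ≤ Vbar z - Vbar w := by linarith
        _ ≤ M * C * (n * dist u w) := hchain
        _ = M * C * n * dist u w := by ring
    intro u hu w hw
    obtain ⟨hu0, hub⟩ := hu
    obtain ⟨hw0, hwb⟩ := hw
    simp only [Set.mem_setOf_eq] at hu0 hw0
    have h1 := main u w hu0 hw0 hub hwb
    have h2 := main w u hw0 hu0 hwb hub
    rw [dist_comm w u] at h2
    have habs : |Vbar u - Vbar w| ≤ M * C * n * dist u w := abs_sub_le_iff.mpr ⟨h1, h2⟩
    rw [Real.dist_eq]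
    have hcoe : ((Real.toNNReal (M * C * n) : NNReal) : ℝ) = M * C * n :=
      Real.coe_toNNReal _ (by positivity)
    rw [hcoe]
    exact habs

end
end
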